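/- (Distortion of the visual quasi-metric under isometries) Let X be a separable geodesic Gromov δ-hyperbolic space satisfying (BA). For every isometry g of X and all ξ, η ∈ Bord X: (1/C(δ))·b^{−(h_ξ(g⁻¹x₀) + h_η(g⁻¹x₀))/2} ≤ D̄_b(gξ, gη)/D̄_b(ξ, η) ≤ C(δ)·b^{−(h_ξ(g⁻¹x₀) + h_η(g⁻¹x₀))/2}, where C(δ) = 4b^{6δ}. -/

import Mathlib

open Filter Topology MeasureTheory TopologicalSpace ENNReal

noncomputable section

namespace Paper

variable {X : Type*} [MetricSpace X]


/-- The Gromov product `⟨x,z⟩_y`. -/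
def gp (x z y : X) : ℝ := (dist x y + dist z y - dist x z) / 2

/-- `X` is Gromov `δ`-hyperbolic: the 4-point condition. -/
def IsHyperbolic (X : Type*) [MetricSpace X] (δ : ℝ) : Prop :=
  ∀ x y z w : X, gp x z w ≥ min (gp x y w) (gp y z w) - δ

/-- `X` is a geodesic metric space. -/
def IsGeodesic (X : Type*) [MetricSpace X] : Prop :=
  ∀ x y : X, ∃ γ : ℝ → X, γ 0 = x ∧ γ (dist x y) = y ∧
    ∀ s ∈ Set.Icc (0:ℝ) (dist x y), ∀ t ∈ Set.Icc (0:ℝ) (dist x y),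
      dist (γ s) (γ t) = |s - t|

/-- A Gromov sequence (a sequence converging to infinity). -/
def IsGromovSeq (x₀ : X) (u : ℕ → X) : Prop :=
  Tendsto (fun p : ℕ × ℕ => gp (u p.1) (u p.2) x₀) atTop atTop

/-- Equivalence of Gromov sequences. -/
def GromovEquiv (x₀ : X) (u v : ℕ → X) : Prop :=
  Tendsto (fun n => gp (u n) (v n) x₀) atTop atTop

/-- The type of Gromov sequences based at `x₀`. -/
def GromovSeq (x₀ : X) := {u : ℕ → X // IsGromovSeq x₀ u}

/-- The relation defining the Gromov boundary. -/
def bRel (x₀ : X) (u v : GromovSeq x₀) : Prop := GromovEquiv x₀ u.1 v.1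

/-- The Gromov boundary `∂X`: equivalence classes of Gromov sequences. -/
def GromovBoundary (x₀ : X) := Quot (bRel x₀)

/-- `Bord X = X ∪ ∂X`. -/
def Bord (x₀ : X) := X ⊕ GromovBoundary x₀

/-- The extension of the Gromov product to `Bord X`, with values in `EReal`. -/
def egp (x₀ : X) : Bord x₀ → Bord x₀ → X → EReal
  | .inl x, .inl y, z => ((gp x y z : ℝ) : EReal)
  | .inl x, .inr η, z => sInf {t : EReal | ∃ v : GromovSeq x₀, Quot.mk (bRel x₀) v = η ∧
      t = liminf (fun n => ((gp x (v.1 n) z : ℝ) : EReal)) atTop}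
  | .inr ξ, .inl y, z => sInf {t : EReal | ∃ u : GromovSeq x₀, Quot.mk (bRel x₀) u = ξ ∧
      t = liminf (fun n => ((gp (u.1 n) y z : ℝ) : EReal)) atTop}
  | .inr ξ, .inr η, z => sInf {t : EReal | ∃ u v : GromovSeq x₀,
      Quot.mk (bRel x₀) u = ξ ∧ Quot.mk (bRel x₀) v = η ∧
      t = liminf (fun p : ℕ × ℕ => ((gp (u.1 p.1) (v.1 p.2) z : ℝ) : EReal)) atTop}

/-- The visual quasi-metric `ρ_b(ξ,η) = b^{-⟨ξ,η⟩_{x₀}}`. -/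
def rho (x₀ : X) (b : ℝ) (ξ η : Bord x₀) : ℝ :=
  if egp x₀ ξ η x₀ = ⊤ then 0 else b ^ (-(egp x₀ ξ η x₀).toReal)

/-- The `ρ_b`-length of a chain. -/
def chainSum (x₀ : X) (b : ℝ) (l : List (Bord x₀)) : ℝ :=
  ((l.zip l.tail).map fun p => rho x₀ b p.1 p.2).sum

/-- `D̄_b`: the infimum of `ρ_b`-lengths of chains joining two points of `Bord X`. -/
def Dbar (x₀ : X) (b : ℝ) (ξ η : Bord x₀) : ℝ :=
  sInf {s : ℝ | ∃ l : List (Bord x₀), l.head? = some ξ ∧ l.getLast? = some η ∧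
    s = chainSum x₀ b l}

/-- The metric `D_b` on `Bord X`. -/
def Db (x₀ : X) (b : ℝ) : Bord x₀ → Bord x₀ → ℝ
  | .inl x, .inl y => min (Real.log b * dist x y) (Dbar x₀ b (.inl x) (.inl y))
  | ξ, η => Dbar x₀ b ξ η


lemma gp_isom (g : X ≃ᵢ X) (x y z : X) : gp (g x) (g y) z = gp x y (g.symm z) := by
  have h1 : dist x (g.symm z) = dist (g x) z := by
    rw [← g.symm.dist_eq (g x) z, g.symm_apply_apply]
  have h2 : dist y (g.symm z) = dist (g y) z := by
    rw [← g.symm.dist_eq (g y) z, g.symm_apply_apply]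
  have h3 : dist (g x) (g y) = dist x y := g.dist_eq x y
  simp only [gp, h1, h2, h3]

lemma gp_base (x y z w : X) : gp x y z - dist w z ≤ gp x y w := by
  have h1 := dist_triangle x w z
  have h2 := dist_triangle y w z
  have h3 := dist_comm w z
  simp only [gp]
  nlinarith [dist_nonneg (x := x) (y := w)]

lemma isGromovSeq_isom (x₀ : X) (g : X ≃ᵢ X) {u : ℕ → X} (hu : IsGromovSeq x₀ u) :
    IsGromovSeq x₀ fun n => g (u n) := by
  have key : ∀ p : ℕ × ℕ,
      gp (u p.1) (u p.2) x₀ + -(dist (g.symm x₀) x₀) ≤ gp (g (u p.1)) (g (u p.2)) x₀ := by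
    intro p
    rw [gp_isom]
    have := gp_base (u p.1) (u p.2) x₀ (g.symm x₀)
    have hd : dist x₀ (g.symm x₀) = dist (g.symm x₀) x₀ := dist_comm _ _
    linarith [gp_base (u p.1) (u p.2) x₀ (g.symm x₀)]
  exact tendsto_atTop_mono key (tendsto_atTop_add_const_right atTop _ hu)

lemma gromovEquiv_isom (x₀ : X) (g : X ≃ᵢ X) {u v : ℕ → X} (huv : GromovEquiv x₀ u v) :
    GromovEquiv x₀ (fun n => g (u n)) fun n => g (v n) := by
  have key : ∀ n : ℕ,
      gp (u n) (v n) x₀ + -(dist (g.symm x₀) x₀) ≤ gp (g (u n)) (g (v n)) x₀ := by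
    intro n
    rw [gp_isom]
    linarith [gp_base (u n) (v n) x₀ (g.symm x₀)]
  exact tendsto_atTop_mono key (tendsto_atTop_add_const_right atTop _ huv)

/-- The action of an isometry on the Gromov boundary. -/
def bMap (x₀ : X) (g : X ≃ᵢ X) : GromovBoundary x₀ → GromovBoundary x₀ :=
  Quot.map (fun u : GromovSeq x₀ => (⟨fun n => g (u.1 n), isGromovSeq_isom x₀ g u.2⟩ : GromovSeq x₀))
    (fun _ _ h => gromovEquiv_isom x₀ g h)

/-- The action of an isometry on `Bord X`. -/
def bordMap (x₀ : X) (g : X ≃ᵢ X) : Bord x₀ → Bord x₀ :=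
  Sum.map (fun x => g x) (bMap x₀ g)


/-- The metric `d_G` on the isometry group. -/
def dG (x₀ : X) (b : ℝ) (g₁ g₂ : X ≃ᵢ X) : ℝ :=
  max (⨆ ξ : Bord x₀, Db x₀ b (bordMap x₀ g₁ ξ) (bordMap x₀ g₂ ξ))
      (⨆ ξ : Bord x₀, Db x₀ b (bordMap x₀ g₁.symm ξ) (bordMap x₀ g₂.symm ξ))

/-- The isometry group of `X`, as a type tagged by the basepoint `x₀` and the
parameter `b`, carrying the topology induced by the metric `d_G` and its Borel
σ-algebra. -/
def IsomG (X : Type*) [MetricSpace X] (x₀ : X) (b : ℝ) : Type _ := X ≃ᵢ X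

variable {x₀ : X} {b : ℝ}

/-- The underlying isometry. -/
def IsomG.toE (g : IsomG X x₀ b) : X ≃ᵢ X := g

instance : Group (IsomG X x₀ b) := inferInstanceAs (Group (X ≃ᵢ X))

/-- The topology on the isometry group generated by the `d_G`-balls (for a genuine
metric this is the metric topology). -/
instance : TopologicalSpace (IsomG X x₀ b) :=
  TopologicalSpace.generateFrom
    {U | ∃ (g : IsomG X x₀ b) (r : ℝ), U = {g' : IsomG X x₀ b | dG x₀ b g.toE g'.toE < r}}

instance : MeasurableSpace (IsomG X x₀ b) := borel (IsomG X x₀ b)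

/-- `μ` is a compactly supported Borel probability measure with support inside the
set `S`. -/
def ProbOn (S : Set (IsomG X x₀ b)) (μ : Measure (IsomG X x₀ b)) : Prop :=
  IsProbabilityMeasure μ ∧
    ∃ K : Set (IsomG X x₀ b), IsCompact K ∧ K ⊆ S ∧ μ Kᶜ = 0

/-- The set `G_λ = {g ∈ G : b^{d(gx₀,x₀)} < λ}`. -/
def Glam (G : Subgroup (IsomG X x₀ b)) (lam : ℝ) : Set (IsomG X x₀ b) :=
  {g : IsomG X x₀ b | g ∈ G ∧ b ^ dist (g.toE x₀) x₀ < lam}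

/-- Convolution of measures on the isometry group. -/
def conv (μ ν : Measure (IsomG X x₀ b)) : Measure (IsomG X x₀ b) :=
  Measure.map (fun p : IsomG X x₀ b × IsomG X x₀ b => p.1 * p.2) (μ.prod ν)

/-- Convolution powers `μⁿ` (with `μ⁰ = δ_id`). -/
def convPow (μ : Measure (IsomG X x₀ b)) : ℕ → Measure (IsomG X x₀ b)
  | 0 => Measure.dirac 1
  | n + 1 => conv μ (convPow μ n)

/-- `HasDrift μ ℓ`: the drift `ℓ(μ) = lim (1/n) ∫ d(gx₀, x₀) dμⁿ(g)` exists and equals `ℓ`. -/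
def HasDrift (μ : Measure (IsomG X x₀ b)) (ℓ : ℝ) : Prop :=
  Tendsto (fun n : ℕ => (∫ g : IsomG X x₀ b, dist (g.toE x₀) x₀ ∂(convPow μ n)) / n)
    atTop (𝓝 ℓ)

/-- A bounded Borel function with `α`-Hölder constant (w.r.t. `d_G`) at most 1. -/
def Holder1 (α : ℝ) (φ : IsomG X x₀ b → ℝ) : Prop :=
  Measurable φ ∧ (∃ C : ℝ, ∀ g, |φ g| ≤ C) ∧
    ∀ g g' : IsomG X x₀ b, |φ g - φ g'| ≤ dG x₀ b g.toE g'.toE ^ α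

/-- The `α`-Hölder Wasserstein distance `W_α`. -/
def Wass (α : ℝ) (μ ν : Measure (IsomG X x₀ b)) : ℝ :=
  sSup {t : ℝ | ∃ φ : IsomG X x₀ b → ℝ, Holder1 α φ ∧
    t = |(∫ g, φ g ∂μ) - ∫ g, φ g ∂ν|}

/-- The function `h_x = d(·,x) - d(x,x₀)`. -/
def hfun (x₀ x : X) : X → ℝ := fun z => dist z x - dist x x₀

/-- The horofunction compactification: the closure of `{h_x : x ∈ X}` in the topology of
pointwise convergence. -/
def Xh (x₀ : X) : Set (X → ℝ) := closure (Set.range (hfun x₀))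

/-- The infinite part `X^h_∞` of the horofunction compactification. -/
def XhInf (x₀ : X) : Set (X → ℝ) := {h ∈ Xh x₀ | ¬ BddBelow (Set.range h)}

/-- The action of isometries on horofunctions: `(g·h)(z) = h(g⁻¹z) - h(g⁻¹x₀)`. -/
def horoAct (x₀ : X) (g : X ≃ᵢ X) (h : X → ℝ) : X → ℝ :=
  fun z => h (g.symm z) - h (g.symm x₀)

/-- `μ` is irreducible: no horofunction is fixed by `μ`-almost every `g`. -/
def IrredMeasure (μ : Measure (IsomG X x₀ b)) : Prop :=
  ¬ ∃ h ∈ Xh x₀, ∀ᵐ g ∂μ, horoAct x₀ (IsomG.toE g) h = h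

/-- The Gromov boundary, tagged by `b`, carrying the visual topology generated by the
`D̄_b`-balls and its Borel σ-algebra. -/
def Bdry (x₀ : X) (b : ℝ) := GromovBoundary x₀

def Bdry.toB (ξ : Bdry x₀ b) : GromovBoundary x₀ := ξ

def Bdry.ofB (x₀ : X) (b : ℝ) (ξ : GromovBoundary x₀) : Bdry x₀ b := ξ

instance : TopologicalSpace (Bdry x₀ b) :=
  TopologicalSpace.generateFrom
    {U | ∃ (ξ : Bdry x₀ b) (r : ℝ),
      U = {η : Bdry x₀ b | Dbar x₀ b (Sum.inr ξ.toB) (Sum.inr η.toB) < r}}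

instance : MeasurableSpace (Bdry x₀ b) := borel (Bdry x₀ b)

/-- The action of `g⁻¹` on the boundary (the convention used for stationary measures). -/
def bdryAct (g : IsomG X x₀ b) (ξ : Bdry x₀ b) : Bdry x₀ b :=
  Bdry.ofB x₀ b (bMap x₀ (IsomG.toE g).symm ξ.toB)

/-- `ν` is `μ`-stationary for the action `(g,ξ) ↦ g⁻¹ξ` of `G` on `∂X`. -/
def Stationary (μ : Measure (IsomG X x₀ b)) (ν : Measure (Bdry x₀ b)) : Prop :=
  μ.bind (fun g => Measure.map (bdryAct g) ν) = ν

/-- The Markov operator `(Q_μ f)(ξ) = ∫ f(g⁻¹ξ) dμ(g)`. -/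
def Qop (μ : Measure (IsomG X x₀ b)) (f : Bdry x₀ b → ℝ) : Bdry x₀ b → ℝ :=
  fun ξ => ∫ g : IsomG X x₀ b, f (bdryAct g ξ) ∂μ

/-- Iterates of the Markov operator. -/
def QopIter (μ : Measure (IsomG X x₀ b)) (f : Bdry x₀ b → ℝ) : ℕ → (Bdry x₀ b → ℝ)
  | 0 => f
  | n + 1 => Qop μ (QopIter μ f n)

/-- The `α`-Hölder constant `υ_α(f)` of a function on the boundary (valued in `ℝ≥0∞`),
w.r.t. the visual metric `D_b = D̄_b` on `∂X`. -/
def holdC (α : ℝ) (f : Bdry x₀ b → ℝ) : ℝ≥0∞ :=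
  ⨆ (p : Bdry x₀ b × Bdry x₀ b) (_ : p.1 ≠ p.2),
    ENNReal.ofReal (|f p.1 - f p.2| / Dbar x₀ b (Sum.inr p.1.toB) (Sum.inr p.2.toB) ^ α)

/-- `f` belongs to the Banach algebra `H_α(∂X)` of bounded Borel boundary Hölder
continuous functions. -/
def MemHolder (α : ℝ) (f : Bdry x₀ b → ℝ) : Prop :=
  Measurable f ∧ (∃ C : ℝ, ∀ ξ, |f ξ| ≤ C) ∧ holdC α f ≠ ⊤

/-- The average Hölder constant `k_α^n(μ)` (valued in `ℝ≥0∞`). -/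
def kcoef (α : ℝ) (μ : Measure (IsomG X x₀ b)) (n : ℕ) : ℝ≥0∞ :=
  ⨆ (p : Bdry x₀ b × Bdry x₀ b) (_ : p.1 ≠ p.2),
    ENNReal.ofReal (∫ g : IsomG X x₀ b,
      (Dbar x₀ b (Sum.inr (bdryAct g p.1).toB) (Sum.inr (bdryAct g p.2).toB) /
        Dbar x₀ b (Sum.inr p.1.toB) (Sum.inr p.2.toB)) ^ α ∂(convPow μ n))

/-- The local-minimum map and its inverse witness the basic assumption (BA): `φ` is a
`G`-equivariant homeomorphism from `X^h_∞` onto `∂X` sending a horofunction to the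
equivalence class of any sequence along which it tends to `-∞`. -/
structure BasicAssumption (x₀ : X) (b : ℝ) (lm : (X → ℝ) → Bdry x₀ b)
    (hinv : Bdry x₀ b → (X → ℝ)) : Prop where
  localMin : ∀ h ∈ XhInf x₀, ∀ y : ℕ → X,
    Tendsto (fun n => h (y n)) atTop atBot →
      ∃ hy : IsGromovSeq x₀ y, (lm h).toB = Quot.mk (bRel x₀) (⟨y, hy⟩ : GromovSeq x₀)
  contOn : ContinuousOn lm (XhInf x₀)
  inv_mem : ∀ ξ : Bdry x₀ b, hinv ξ ∈ XhInf x₀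
  left_inv : ∀ h ∈ XhInf x₀, hinv (lm h) = h
  right_inv : ∀ ξ : Bdry x₀ b, lm (hinv ξ) = ξ
  cont_inv : Continuous hinv

/-- The horofunction `h_ξ` associated to a point of `Bord X` (for `ξ ∈ X` this is `h_x`,
for `ξ ∈ ∂X` it is the horofunction corresponding to `ξ` under (BA)). -/
def hB (x₀ : X) (b : ℝ) (hinv : Bdry x₀ b → (X → ℝ)) : Bord x₀ → (X → ℝ)
  | .inl x => hfun x₀ x
  | .inr ξ => hinv (Bdry.ofB x₀ b ξ)

/-- `P` is the product measure `μ^ℕ` on `Ω = G^ℕ`. -/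
def IsProductMeasure (μ : Measure (IsomG X x₀ b)) (P : Measure (ℕ → IsomG X x₀ b)) : Prop :=
  IsProbabilityMeasure P ∧
    ∀ (n : ℕ) (E : Fin n → Set (IsomG X x₀ b)), (∀ i, MeasurableSet (E i)) →
      P {ω | ∀ i : Fin n, ω i ∈ E i} = ∏ i : Fin n, μ (E i)

/-- `ωⁿ = g₀g₁⋯g_{n-1}`. -/
def prodN (ω : ℕ → IsomG X x₀ b) (n : ℕ) : IsomG X x₀ b :=
  ((List.range n).map ω).prod

/-! ### Auxiliary development for the distortion theorem -/

section AuxGp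

variable {X : Type*} [MetricSpace X]

lemma gp_nonneg (x y z : X) : 0 ≤ gp x y z := by
  have h1 := dist_triangle x z y
  have h2 : dist z y = dist y z := dist_comm z y
  simp only [gp]; linarith

lemma gp_comm' (x y z : X) : gp x y z = gp y x z := by
  simp only [gp]; rw [dist_comm x y]; ring

lemma gp_le_dist (x y z : X) : gp x y z ≤ dist y z := by
  have h1 := dist_triangle x y z  -- wrong? need dist x z ≤ dist x y + dist y z
  have h2 := dist_triangle x z y
  simp only [gp]; linarith [dist_triangle x y z]

lemma gp_le_dist' (x y z : X) : gp x y z ≤ dist x z := by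
  rw [gp_comm']; exact gp_le_dist y x z

/-- Exact base-change identity for the Gromov product. -/
lemma gp_base_eq (u v y w : X) :
    gp u v y = gp u v w + ((dist y u - dist u w) + (dist y v - dist v w)) / 2 := by
  simp only [gp]; rw [dist_comm u y, dist_comm v y]; ring

/-- `h_x(y) = d(y,x₀) - 2⟨y,x⟩_{x₀}`. -/
lemma hfun_eq (x₀ x y : X) : hfun x₀ x y = dist y x₀ - 2 * gp y x x₀ := by
  simp only [hfun, gp]; ring

lemma hfun_base (x₀ u v y : X) :
    gp u v y = gp u v x₀ + (hfun x₀ u y + hfun x₀ v y) / 2 := by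
  simp only [hfun]
  rw [gp_base_eq u v y x₀]

end AuxGp

section AuxLiminf

open Filter

lemma ev_prod_fst {P : ℕ → Prop} (h : ∀ᶠ n in (atTop : Filter ℕ), P n) :
    ∀ᶠ p : ℕ × ℕ in atTop, P p.1 := by
  obtain ⟨N, hN⟩ := eventually_atTop.1 h
  exact eventually_atTop.2 ⟨(N, N), fun p hp => hN p.1 hp.1⟩

lemma ev_prod_snd {P : ℕ → Prop} (h : ∀ᶠ n in (atTop : Filter ℕ), P n) :
    ∀ᶠ p : ℕ × ℕ in atTop, P p.2 := by
  obtain ⟨N, hN⟩ := eventually_atTop.1 h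
  exact eventually_atTop.2 ⟨(N, N), fun p hp => hN p.2 hp.2⟩

lemma le_liminf_of_ev {α : Type*} {F : Filter α} {f : α → EReal} {c : EReal}
    (h : ∀ᶠ x in F, c ≤ f x) : c ≤ liminf f F := by
  rw [liminf_eq]; exact le_sSup h

lemma liminf_le_of_ev {α : Type*} {F : Filter α} [F.NeBot] {f : α → EReal} {c : EReal}
    (h : ∀ᶠ x in F, f x ≤ c) : liminf f F ≤ c := by
  rw [liminf_eq]
  refine sSup_le fun a ha => ?_
  obtain ⟨x, h1, h2⟩ := (ha.and h).exists
  exact le_trans h1 h2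

lemma ev_lt_of_lt_liminf {α : Type*} {F : Filter α} {f : α → EReal} {c : EReal}
    (h : c < liminf f F) : ∀ᶠ x in F, c < f x := by
  rw [liminf_eq] at h
  obtain ⟨a, ha, hca⟩ := lt_sSup_iff.1 h
  exact ha.mono fun x hx => lt_of_lt_of_le hca hx

/-- Adding a real constant as an order isomorphism of `EReal`. -/
noncomputable def erealShift (c : ℝ) : EReal ≃o EReal where
  toFun x := x + (c : EReal)
  invFun x := x - (c : EReal)
  left_inv x := EReal.add_sub_cancel_right
  right_inv x := EReal.sub_add_cancel
  map_rel_iff' := by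
    intro x y
    exact (EReal.addLECancellable_coe c).add_le_add_iff_right

lemma liminf_add_coe {α : Type*} {F : Filter α} (f : α → EReal) (c : ℝ) :
    liminf (fun x => f x + (c : EReal)) F = liminf f F + (c : EReal) := by
  have h := OrderIso.liminf_apply (erealShift c) (f := F) (u := f)
  simpa [erealShift] using h.symm

lemma liminf_mono' {α : Type*} {F : Filter α} {f g : α → EReal} (h : ∀ᶠ x in F, f x ≤ g x) :
    Filter.liminf f F ≤ Filter.liminf g F :=
  Filter.liminf_le_liminf h

lemma ereal_le_of_forall_lt {A B : EReal} (h : ∀ r : ℝ, (r : EReal) < A → (r : EReal) ≤ B) :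
    A ≤ B := by
  by_contra hc
  push_neg at hc
  obtain ⟨r, hr1, hr2⟩ := EReal.exists_between_coe_real hc
  exact absurd (h r hr2) (not_le.2 hr1)

lemma liminf_comp_snd (F : ℕ → EReal) :
    liminf (fun p : ℕ × ℕ => F p.2) atTop = liminf F atTop := by
  rw [liminf_eq, liminf_eq]; congr 1; ext a
  simp only [Set.mem_setOf_eq]
  constructor
  · intro h
    obtain ⟨N, hN⟩ := eventually_atTop.1 h
    exact eventually_atTop.2 ⟨N.2, fun m hm => hN (N.1, m) ⟨le_rfl, hm⟩⟩
  · intro h; exact ev_prod_snd h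

lemma liminf_comp_fst (F : ℕ → EReal) :
    liminf (fun p : ℕ × ℕ => F p.1) atTop = liminf F atTop := by
  rw [liminf_eq, liminf_eq]; congr 1; ext a
  simp only [Set.mem_setOf_eq]
  constructor
  · intro h
    obtain ⟨N, hN⟩ := eventually_atTop.1 h
    exact eventually_atTop.2 ⟨N.1, fun m hm => hN (m, N.2) ⟨hm, le_rfl⟩⟩
  · intro h; exact ev_prod_fst h

end AuxLiminf

section AuxRhoVal

/-- The value `b^{-A}` for `A : EReal`, with value `0` at `A = ⊤`. -/
noncomputable def rhoVal (b : ℝ) (A : EReal) : ℝ := if A = ⊤ then 0 else b ^ (-A.toReal)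

variable {X : Type*} [MetricSpace X]

lemma rho_eq_rhoVal (x₀ : X) (b : ℝ) (ξ η : Bord x₀) :
    rho x₀ b ξ η = rhoVal b (egp x₀ ξ η x₀) := rfl

lemma rhoVal_nonneg {b : ℝ} (hb : 0 < b) (A : EReal) : 0 ≤ rhoVal b A := by
  unfold rhoVal; split_ifs
  · exact le_rfl
  · exact (Real.rpow_pos_of_pos hb _).le

lemma rhoVal_top (b : ℝ) : rhoVal b ⊤ = 0 := by simp [rhoVal]

lemma rhoVal_antitone {b : ℝ} (hb : 1 < b) {A B : EReal} (hA : A ≠ ⊥) (h : A ≤ B) :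
    rhoVal b B ≤ rhoVal b A := by
  by_cases hB : B = ⊤
  · rw [hB, rhoVal_top]; exact rhoVal_nonneg (lt_trans one_pos hb) A
  · have hAT : A ≠ ⊤ := fun hA' => hB (top_le_iff.1 (hA' ▸ h))
    unfold rhoVal
    rw [if_neg hB, if_neg hAT]
    rw [Real.rpow_le_rpow_left_iff hb]
    exact neg_le_neg (EReal.toReal_le_toReal h hA hB)

lemma rhoVal_add_coe {b : ℝ} (hb : 0 < b) {A : EReal} (hA : A ≠ ⊥) (r : ℝ) :
    rhoVal b (A + (r : EReal)) = b ^ (-r) * rhoVal b A := by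
  induction A with
  | bot => exact absurd rfl hA
  | coe a =>
      rw [← EReal.coe_add]
      unfold rhoVal
      rw [if_neg (EReal.coe_ne_top _), if_neg (EReal.coe_ne_top _)]
      rw [EReal.toReal_coe, EReal.toReal_coe, neg_add, Real.rpow_add hb]
      ring
  | top =>
      rw [EReal.top_add_coe]
      simp [rhoVal]

end AuxRhoVal

section AuxEquiv

open Filter

variable {X : Type*} [MetricSpace X] {x₀ : X} {δ : ℝ}

lemma isGromovSeq_iff {u : ℕ → X} :
    IsGromovSeq x₀ u ↔ ∀ C : ℝ, ∃ N, ∀ m n, N ≤ m → N ≤ n → C ≤ gp (u m) (u n) x₀ := by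
  unfold IsGromovSeq
  rw [Filter.tendsto_atTop]
  constructor
  · intro h C
    obtain ⟨N, hN⟩ := Filter.eventually_atTop.1 (h C)
    exact ⟨max N.1 N.2, fun m n hm hn =>
      hN (m, n) ⟨le_trans (le_max_left _ _) hm, le_trans (le_max_right _ _) hn⟩⟩
  · intro h C
    obtain ⟨N, hN⟩ := h C
    exact Filter.eventually_atTop.2 ⟨(N, N), fun p hp => hN p.1 p.2 hp.1 hp.2⟩

lemma gromovEquiv_iff {u v : ℕ → X} :
    GromovEquiv x₀ u v ↔ ∀ C : ℝ, ∃ N, ∀ n, N ≤ n → C ≤ gp (u n) (v n) x₀ := by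
  unfold GromovEquiv
  rw [Filter.tendsto_atTop]
  constructor
  · intro h C
    obtain ⟨N, hN⟩ := Filter.eventually_atTop.1 (h C)
    exact ⟨N, hN⟩
  · intro h C
    obtain ⟨N, hN⟩ := h C
    exact Filter.eventually_atTop.2 ⟨N, hN⟩

lemma gromovEquiv_refl {u : ℕ → X} (hu : IsGromovSeq x₀ u) : GromovEquiv x₀ u u := by
  rw [gromovEquiv_iff]
  intro C
  obtain ⟨N, hN⟩ := isGromovSeq_iff.1 hu C
  exact ⟨N, fun n hn => hN n n hn hn⟩

lemma gromovEquiv_symm {u v : ℕ → X} (h : GromovEquiv x₀ u v) : GromovEquiv x₀ v u := by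
  rw [gromovEquiv_iff] at h ⊢
  intro C
  obtain ⟨N, hN⟩ := h C
  exact ⟨N, fun n hn => by rw [gp_comm']; exact hN n hn⟩

lemma gromovEquiv_trans (hhyp : IsHyperbolic X δ) {u v w : ℕ → X}
    (h1 : GromovEquiv x₀ u v) (h2 : GromovEquiv x₀ v w) : GromovEquiv x₀ u w := by
  rw [gromovEquiv_iff] at h1 h2 ⊢
  intro C
  obtain ⟨N1, hN1⟩ := h1 (C + δ)
  obtain ⟨N2, hN2⟩ := h2 (C + δ)
  refine ⟨max N1 N2, fun n hn => ?_⟩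
  have g1 := hN1 n (le_trans (le_max_left _ _) hn)
  have g2 := hN2 n (le_trans (le_max_right _ _) hn)
  have := hhyp (u n) (v n) (w n) x₀
  have hm : C + δ ≤ min (gp (u n) (v n) x₀) (gp (v n) (w n) x₀) := le_min g1 g2
  linarith [this]

lemma bRel_equivalence (hhyp : IsHyperbolic X δ) : Equivalence (bRel x₀) :=
  ⟨fun u => gromovEquiv_refl u.2, fun h => gromovEquiv_symm h,
    fun h1 h2 => gromovEquiv_trans hhyp h1 h2⟩

lemma class_eq_iff (hhyp : IsHyperbolic X δ) {u v : GromovSeq x₀} :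
    Quot.mk (bRel x₀) u = Quot.mk (bRel x₀) v ↔ bRel x₀ u v :=
  Quot.eq.trans (bRel_equivalence hhyp).eqvGen_iff

end AuxEquiv

section AuxSeqSet

open Filter

variable {X : Type*} [MetricSpace X]

/-- The set of sequences representing a point of `Bord X`. -/
def SeqSet (x₀ : X) : Bord x₀ → Set (ℕ → X)
  | .inl x => {fun _ => x}
  | .inr ξ => {u | ∃ h : IsGromovSeq x₀ u, Quot.mk (bRel x₀) ⟨u, h⟩ = ξ}

lemma seqSet_nonempty (x₀ : X) (α : Bord x₀) : (SeqSet x₀ α).Nonempty := by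
  cases α with
  | inl x => exact ⟨fun _ => x, rfl⟩
  | inr ξ =>
      obtain ⟨u, hu⟩ := Quot.exists_rep ξ
      exact ⟨u.1, u.2, hu⟩

lemma seqSet_gromov {x₀ : X} {ξ : GromovBoundary x₀} {u : ℕ → X}
    (hu : u ∈ SeqSet x₀ (Sum.inr ξ)) : IsGromovSeq x₀ u := hu.1

/-- The defining set for the unified description of `egp`. -/
def egpSet (x₀ : X) (α β : Bord x₀) (z : X) : Set EReal :=
  {t | ∃ u ∈ SeqSet x₀ α, ∃ v ∈ SeqSet x₀ β,
    t = Filter.liminf (fun p : ℕ × ℕ => ((gp (u p.1) (v p.2) z : ℝ) : EReal)) Filter.atTop}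

lemma egp_eq (x₀ : X) (α β : Bord x₀) (z : X) :
    egp x₀ α β z = sInf (egpSet x₀ α β z) := by
  cases α with
  | inl x =>
    cases β with
    | inl y =>
        have hset : egpSet x₀ (Sum.inl x) (Sum.inl y) z = {((gp x y z : ℝ) : EReal)} := by
          ext t
          simp only [egpSet, SeqSet, Set.mem_setOf_eq, Set.mem_singleton_iff]
          constructor
          · rintro ⟨u, hu, v, hv, rfl⟩
            subst hu; subst hv
            exact liminf_const _
          · rintro rfl
            exact ⟨fun _ => x, rfl, fun _ => y, rfl, (liminf_const _).symm⟩
        rw [hset, sInf_singleton]; rfl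
    | inr η =>
        show sInf _ = sInf _
        congr 1
        ext t
        simp only [egpSet, SeqSet, Set.mem_setOf_eq, Set.mem_singleton_iff]
        constructor
        · rintro ⟨v, hQ, rfl⟩
          refine ⟨fun _ => x, rfl, v.1, ⟨v.2, hQ⟩, ?_⟩
          show liminf (fun n : ℕ => ((gp x (v.1 n) z : ℝ) : EReal)) atTop
            = liminf (fun p : ℕ × ℕ => ((gp x (v.1 p.2) z : ℝ) : EReal)) atTop
          exact (liminf_comp_snd (fun m => ((gp x (v.1 m) z : ℝ) : EReal))).symm
        · rintro ⟨u, hu, v, ⟨hv, hQ⟩, rfl⟩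
          subst hu
          refine ⟨⟨v, hv⟩, hQ, ?_⟩
          show liminf (fun p : ℕ × ℕ => ((gp x (v p.2) z : ℝ) : EReal)) atTop
            = liminf (fun n : ℕ => ((gp x (v n) z : ℝ) : EReal)) atTop
          exact liminf_comp_snd (fun m => ((gp x (v m) z : ℝ) : EReal))
  | inr ξ =>
    cases β with
    | inl y =>
        show sInf _ = sInf _
        congr 1
        ext t
        simp only [egpSet, SeqSet, Set.mem_setOf_eq, Set.mem_singleton_iff]
        constructor
        · rintro ⟨u, hQ, rfl⟩
          refine ⟨u.1, ⟨u.2, hQ⟩, fun _ => y, rfl, ?_⟩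
          show liminf (fun n : ℕ => ((gp (u.1 n) y z : ℝ) : EReal)) atTop
            = liminf (fun p : ℕ × ℕ => ((gp (u.1 p.1) y z : ℝ) : EReal)) atTop
          exact (liminf_comp_fst (fun m => ((gp (u.1 m) y z : ℝ) : EReal))).symm
        · rintro ⟨u, ⟨hu, hQ⟩, v, hv, rfl⟩
          subst hv
          refine ⟨⟨u, hu⟩, hQ, ?_⟩
          show liminf (fun p : ℕ × ℕ => ((gp (u p.1) y z : ℝ) : EReal)) atTop
            = liminf (fun n : ℕ => ((gp (u n) y z : ℝ) : EReal)) atTop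
          exact liminf_comp_fst (fun m => ((gp (u m) y z : ℝ) : EReal))
    | inr η =>
        show sInf _ = sInf _
        congr 1
        ext t
        simp only [egpSet, SeqSet, Set.mem_setOf_eq]
        constructor
        · rintro ⟨u, v, hQu, hQv, rfl⟩
          exact ⟨u.1, ⟨u.2, hQu⟩, v.1, ⟨v.2, hQv⟩, rfl⟩
        · rintro ⟨u, ⟨hu, hQu⟩, v, ⟨hv, hQv⟩, rfl⟩
          exact ⟨⟨u, hu⟩, ⟨v, hv⟩, hQu, hQv, rfl⟩

lemma egpSet_nonempty (x₀ : X) (α β : Bord x₀) (z : X) : (egpSet x₀ α β z).Nonempty := by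
  obtain ⟨u, hu⟩ := seqSet_nonempty x₀ α
  obtain ⟨v, hv⟩ := seqSet_nonempty x₀ β
  exact ⟨_, u, hu, v, hv, rfl⟩

lemma egp_nonneg (x₀ : X) (α β : Bord x₀) (z : X) : (0 : EReal) ≤ egp x₀ α β z := by
  rw [egp_eq]
  refine le_sInf fun t ht => ?_
  obtain ⟨u, hu, v, hv, rfl⟩ := ht
  exact le_liminf_of_ev (Filter.Eventually.of_forall fun p =>
    EReal.coe_nonneg.2 (gp_nonneg _ _ _))

lemma egp_ne_bot (x₀ : X) (α β : Bord x₀) (z : X) : egp x₀ α β z ≠ ⊥ :=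
  fun h => by simpa [h] using egp_nonneg x₀ α β z

lemma egp_le_mem {x₀ : X} {α β : Bord x₀} {z : X} {u v : ℕ → X}
    (hu : u ∈ SeqSet x₀ α) (hv : v ∈ SeqSet x₀ β) :
    egp x₀ α β z ≤ Filter.liminf (fun p : ℕ × ℕ => ((gp (u p.1) (v p.2) z : ℝ) : EReal)) Filter.atTop := by
  rw [egp_eq]
  exact sInf_le ⟨u, hu, v, hv, rfl⟩

/-- The hyperbolic inequality for the extended Gromov product. -/
lemma egp_hyp {δ : ℝ} (hhyp : IsHyperbolic X δ) (x₀ : X) (α β γ : Bord x₀) :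
    min (egp x₀ α β x₀) (egp x₀ β γ x₀) ≤ egp x₀ α γ x₀ + (δ : EReal) := by
  obtain ⟨v, hv⟩ := seqSet_nonempty x₀ β
  have key : ∀ t ∈ egpSet x₀ α γ x₀, min (egp x₀ α β x₀) (egp x₀ β γ x₀) ≤ t + (δ : EReal) := by
    rintro t ⟨u, hu, w, hw, rfl⟩
    refine ereal_le_of_forall_lt fun r hr => ?_
    have hr1 : (r : EReal) < egp x₀ α β x₀ := lt_of_lt_of_le hr (min_le_left _ _)
    have hr2 : (r : EReal) < egp x₀ β γ x₀ := lt_of_lt_of_le hr (min_le_right _ _)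
    have e1 := ev_lt_of_lt_liminf (lt_of_lt_of_le hr1 (egp_le_mem hu hv))
    have e2 := ev_lt_of_lt_liminf (lt_of_lt_of_le hr2 (egp_le_mem hv hw))
    obtain ⟨P1, hP1⟩ := eventually_atTop.1 e1
    obtain ⟨P2, hP2⟩ := eventually_atTop.1 e2
    set k := max P1.2 P2.1 with hk
    have hev : ∀ᶠ p : ℕ × ℕ in atTop, ((r - δ : ℝ) : EReal) ≤ ((gp (u p.1) (w p.2) x₀ : ℝ) : EReal) := by
      refine eventually_atTop.2 ⟨(P1.1, P2.2), fun p hp => ?_⟩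
      have h1 : (r : EReal) < ((gp (u p.1) (v k) x₀ : ℝ) : EReal) :=
        hP1 (p.1, k) ⟨hp.1, le_max_left _ _⟩
      have h2 : (r : EReal) < ((gp (v k) (w p.2) x₀ : ℝ) : EReal) :=
        hP2 (k, p.2) ⟨le_max_right _ _, hp.2⟩
      rw [EReal.coe_lt_coe_iff] at h1 h2
      rw [EReal.coe_le_coe_iff]
      have h3 := hhyp (u p.1) (v k) (w p.2) x₀
      have hm : r ≤ min (gp (u p.1) (v k) x₀) (gp (v k) (w p.2) x₀) := le_min h1.le h2.le
      linarith [h3]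
    have hlim : ((r - δ : ℝ) : EReal) ≤
        Filter.liminf (fun p : ℕ × ℕ => ((gp (u p.1) (w p.2) x₀ : ℝ) : EReal)) Filter.atTop :=
      le_liminf_of_ev hev
    calc (r : EReal) = ((r - δ : ℝ) : EReal) + ((δ : ℝ) : EReal) := by
          rw [← EReal.coe_add]; norm_num
      _ ≤ _ + ((δ : ℝ) : EReal) := add_le_add_left hlim _
  rw [egp_eq x₀ α γ x₀]
  refine ereal_le_of_forall_lt fun r hr => ?_
  have h2 : ∀ t ∈ egpSet x₀ α γ x₀, ((r - δ : ℝ) : EReal) ≤ t := by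
    intro t ht
    have hkey := key t ht
    have hrt : (r : EReal) ≤ t + ((δ : ℝ) : EReal) := le_of_lt (lt_of_lt_of_le hr hkey)
    have h5 := add_le_add_left hrt ((-δ : ℝ) : EReal)
    have harr : (r : EReal) + ((-δ : ℝ) : EReal) = ((r - δ : ℝ) : EReal) := by
      norm_cast
    have harr2 : t + ((δ : ℝ) : EReal) + ((-δ : ℝ) : EReal) = t := by
      rw [add_assoc]
      have : ((δ : ℝ) : EReal) + ((-δ : ℝ) : EReal) = (0 : EReal) := by norm_cast; ring
      rw [this, add_zero]
    rw [harr, harr2] at h5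
    exact h5
  have h3 : ((r - δ : ℝ) : EReal) ≤ sInf (egpSet x₀ α γ x₀) := le_sInf h2
  calc (r : EReal) = ((r - δ : ℝ) : EReal) + ((δ : ℝ) : EReal) := by rw [← EReal.coe_add]; norm_num
    _ ≤ _ + ((δ : ℝ) : EReal) := add_le_add_left h3 _
end AuxSeqSet

section AuxQuasi

variable {X : Type*} [MetricSpace X]

lemma rpow_delta_le_two {δ b : ℝ} (hδ : 0 < δ) (hb : 1 < b) (hb2 : b ≤ (2:ℝ) ^ (1/δ)) :
    b ^ δ ≤ 2 := by
  have h0 : (0:ℝ) ≤ b := le_of_lt (lt_trans one_pos hb)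
  have h1 : b ^ δ ≤ ((2:ℝ) ^ (1/δ)) ^ δ := Real.rpow_le_rpow h0 hb2 hδ.le
  have h2 : ((2:ℝ) ^ (1/δ)) ^ δ = (2:ℝ) ^ ((1/δ) * δ) := (Real.rpow_mul (by norm_num) _ _).symm
  have h3 : (1/δ) * δ = 1 := by field_simp
  rw [h2, h3, Real.rpow_one] at h1
  exact h1

lemma rho_nonneg {b : ℝ} (hb : 1 < b) (x₀ : X) (α β : Bord x₀) : 0 ≤ rho x₀ b α β := by
  rw [rho_eq_rhoVal]; exact rhoVal_nonneg (lt_trans one_pos hb) _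

/-- `ρ_b` is a 2-quasimetric when `b ≤ 2^{1/δ}`. -/
lemma rho_quasi {δ b : ℝ} (hδ : 0 < δ) (hb : 1 < b) (hb2 : b ≤ (2:ℝ) ^ (1/δ))
    (hhyp : IsHyperbolic X δ) (x₀ : X) (α β γ : Bord x₀) :
    rho x₀ b α γ ≤ 2 * max (rho x₀ b α β) (rho x₀ b β γ) := by
  have hb0 : (0:ℝ) < b := lt_trans one_pos hb
  by_cases hT : egp x₀ α γ x₀ = ⊤
  · rw [rho_eq_rhoVal, hT, rhoVal_top]
    have := rho_nonneg hb x₀ α β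
    have := rho_nonneg hb x₀ β γ
    have : (0:ℝ) ≤ max (rho x₀ b α β) (rho x₀ b β γ) := le_max_of_le_left ‹0 ≤ rho x₀ b α β›
    linarith
  · have hmin := egp_hyp hhyp x₀ α β γ
    -- rhoVal (egp αγ + δ) ≤ rhoVal (min e1 e2) = max (rho αβ) (rho βγ)
    have hminnb : min (egp x₀ α β x₀) (egp x₀ β γ x₀) ≠ ⊥ := by
      rcases min_cases (egp x₀ α β x₀) (egp x₀ β γ x₀) with ⟨h, _⟩ | ⟨h, _⟩ <;>
        rw [h] <;> exact egp_ne_bot _ _ _ _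
    have h1 : rhoVal b (egp x₀ α γ x₀ + ((δ:ℝ) : EReal)) ≤
        rhoVal b (min (egp x₀ α β x₀) (egp x₀ β γ x₀)) :=
      rhoVal_antitone hb hminnb hmin
    have h2 : rhoVal b (egp x₀ α γ x₀ + ((δ:ℝ) : EReal)) = b ^ (-δ) * rho x₀ b α γ := by
      rw [rho_eq_rhoVal]; exact rhoVal_add_coe hb0 (egp_ne_bot _ _ _ _) δ
    have h3 : rhoVal b (min (egp x₀ α β x₀) (egp x₀ β γ x₀)) ≤
        max (rho x₀ b α β) (rho x₀ b β γ) := by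
      rcases min_cases (egp x₀ α β x₀) (egp x₀ β γ x₀) with ⟨h, _⟩ | ⟨h, _⟩
      · rw [h, ← rho_eq_rhoVal]; exact le_max_left _ _
      · rw [h, ← rho_eq_rhoVal]; exact le_max_right _ _
    have h4 : b ^ (-δ) * rho x₀ b α γ ≤ max (rho x₀ b α β) (rho x₀ b β γ) := by
      rw [← h2]; exact le_trans h1 h3
    have h5 : rho x₀ b α γ ≤ b ^ δ * max (rho x₀ b α β) (rho x₀ b β γ) := by
      have hpos : (0:ℝ) < b ^ (-δ) := Real.rpow_pos_of_pos hb0 _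
      rw [Real.rpow_neg hb0.le] at h4 hpos
      rw [← inv_mul_le_iff₀ (by positivity : (0:ℝ) < b ^ δ)]
      exact h4
    have h6 : b ^ δ * max (rho x₀ b α β) (rho x₀ b β γ) ≤
        2 * max (rho x₀ b α β) (rho x₀ b β γ) := by
      apply mul_le_mul_of_nonneg_right (rpow_delta_le_two hδ hb hb2)
      exact le_max_of_le_left (rho_nonneg hb x₀ α β)
    linarith

end AuxQuasi

section Frink

open Finset

variable {Y : Type*} (ρ : Y → Y → ℝ)

/-- partial sums of a chain -/
private def csum (f : ℕ → Y) (n : ℕ) : ℝ := ∑ i ∈ Finset.range n, ρ (f i) (f (i+1))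

/-- midpoint of edge `i` -/
private def mid (f : ℕ → Y) (i : ℕ) : ℝ := csum ρ f i + ρ (f i) (f (i+1)) / 2

variable {ρ}

private lemma csum_succ (f : ℕ → Y) (n : ℕ) :
    csum ρ f (n+1) = csum ρ f n + ρ (f n) (f (n+1)) := Finset.sum_range_succ _ _

private lemma csum_shift (f : ℕ → Y) (p i : ℕ) :
    csum ρ (fun j => f (p + j)) i = csum ρ f (p + i) - csum ρ f p := by
  unfold csum
  rw [Finset.sum_range_add (fun i => ρ (f i) (f (i+1))) p i]
  have : ∀ j, ρ (f (p + j)) (f (p + j + 1)) = ρ (f (p+j)) (f (p + (j+1))) := by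
    intro j; rw [← add_assoc]
  simp only [this]
  ring

private lemma mid_shift (f : ℕ → Y) (p i : ℕ) :
    mid ρ (fun j => f (p + j)) i = mid ρ f (p + i) - csum ρ f p := by
  unfold mid
  rw [csum_shift]
  have : p + i + 1 = p + (i + 1) := by ring
  rw [this]
  ring

private lemma mid_mono (h0 : ∀ a b, 0 ≤ ρ a b) (f : ℕ → Y) : Monotone (mid ρ f) := by
  apply monotone_nat_of_le_succ
  intro j
  unfold mid
  rw [csum_succ]
  have := h0 (f j) (f (j+1))
  have := h0 (f (j+1)) (f (j+1+1))
  linarith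

private lemma mid_spread (h0 : ∀ a b, 0 ≤ ρ a b) (f : ℕ → Y) {i j : ℕ} (hij : i < j) :
    (ρ (f i) (f (i+1)) + ρ (f j) (f (j+1))) / 2 ≤ mid ρ f j - mid ρ f i := by
  unfold mid
  have hcs : csum ρ f i + ρ (f i) (f (i+1)) ≤ csum ρ f j := by
    have h1 : csum ρ f (i+1) ≤ csum ρ f j := by
      unfold csum
      apply Finset.sum_le_sum_of_subset_of_nonneg
      · exact Finset.range_subset_range.2 hij
      · intro k _ _; exact h0 _ _
    rw [csum_succ] at h1
    linarith
  linarith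

/-- The Gilbert–Moore / Frink chain lemma, dyadic induction. -/
private lemma gmB (h0 : ∀ a b, 0 ≤ ρ a b)
    (hq : ∀ a b c, ρ a c ≤ 2 * max (ρ a b) (ρ b c)) :
    ∀ k : ℕ, ∀ n : ℕ, ∀ f : ℕ → Y, ∀ c ℓ g : ℝ, 2 ≤ n →
      (∀ i < n, c ≤ mid ρ f i ∧ mid ρ f i < c + ℓ) →
      (∀ i, i + 1 < n → g ≤ mid ρ f (i+1) - mid ρ f i) →
      ℓ ≤ 2 ^ k * g →
      ρ (f 0) (f n) ≤ 4 * ℓ := by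
  intro k
  induction k with
  | zero =>
      intro n f c ℓ g hn hcont hgap hlg
      exfalso
      have h01 : (0:ℕ) + 1 < n := by omega
      have hg := hgap 0 h01
      have hc0 := hcont 0 (by omega)
      have hc1 := hcont 1 (by omega)
      have : mid ρ f 1 - mid ρ f 0 < ℓ := by linarith [hc0.1, hc1.2]
      simp only [pow_zero, one_mul] at hlg
      linarith
  | succ k ih =>
      intro n f c ℓ g hn hcont hgap hlg
      have hℓpos : 0 < ℓ := by
        have := hcont 0 (by omega)
        linarith [this.1, this.2]
      have hlg' : ℓ / 2 ≤ 2 ^ k * g := by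
        rw [pow_succ] at hlg
        linarith
      set t := c + ℓ / 2 with ht
      by_cases hall : ∀ i < n, mid ρ f i < t
      · -- all in the left half
        have := ih n f c (ℓ/2) g hn (fun i hi => ⟨(hcont i hi).1, by
            have h5 := hall i hi; rw [ht] at h5; linarith⟩) hgap hlg'
        linarith
      · push_neg at hall
        obtain ⟨i₀, hi₀n, hi₀⟩ := hall
        -- p := least index with t ≤ mid
        have hex : ∃ p, t ≤ mid ρ f p := ⟨i₀, hi₀⟩
        classical
        set p := Nat.find hex with hp
        have hpt : t ≤ mid ρ f p := Nat.find_spec hex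
        have hplt : ∀ j < p, mid ρ f j < t := fun j hj => not_le.1 (Nat.find_min hex hj)
        have hpn : p < n := by
          by_contra hc
          push_neg at hc
          exact absurd (Nat.find_min' hex hi₀) (by omega)
        by_cases hp0 : p = 0
        · -- all on the right half
          have hall' : ∀ i < n, t ≤ mid ρ f i := by
            intro i hi
            exact le_trans (hp0 ▸ hpt) (mid_mono h0 f (Nat.zero_le i))
          have := ih n f t (ℓ/2) g hn (fun i hi => ⟨hall' i hi, by
              have h5 := (hcont i hi).2
              rw [ht]; linarith⟩) hgap hlg'
          linarith
        · -- genuine split at p ≥ 1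
          have hp1 : 1 ≤ p := Nat.one_le_iff_ne_zero.2 hp0
          -- left part bound : ρ (f 0) (f p) ≤ 2 ℓ
          have hleft : ρ (f 0) (f p) ≤ 2 * ℓ := by
            rcases eq_or_lt_of_le hp1 with h1 | h1
            · -- p = 1 : single edge, use spread with edge 1
              rw [← h1]
              have hs := mid_spread h0 f (show 0 < 1 by norm_num)
              have hm0 := hcont 0 (by omega)
              have hm1 := hcont 1 (by omega)
              have := h0 (f 1) (f 2)
              have hd : mid ρ f 1 - mid ρ f 0 < ℓ := by linarith [hm0.1, hm1.2]
              linarith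
            · -- p ≥ 2 : induction hypothesis on the left subchain
              have := ih p f c (ℓ/2) g h1 (fun i hi => ⟨(hcont i (by omega)).1, by
                  have h5 := hplt i hi; rw [ht] at h5; linarith⟩)
                (fun i hi => hgap i (by omega)) hlg'
              linarith
          -- right part bound : ρ (f p) (f n) ≤ 2 ℓ
          have hright : ρ (f p) (f n) ≤ 2 * ℓ := by
            rcases eq_or_lt_of_le (show p + 1 ≤ n by omega) with h1 | h1
            · -- single edge p = n - 1, use spread with edge p-1
              have hs := mid_spread h0 f (show p - 1 < p by omega)
              have hpm : p - 1 + 1 = p := by omega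
              rw [hpm] at hs
              have hm0 := hcont (p-1) (by omega)
              have hm1 := hcont p hpn
              have hnn := h0 (f (p-1)) (f p)
              have hd : mid ρ f p - mid ρ f (p-1) < ℓ := by linarith [hm0.1, hm1.2]
              rw [← h1]
              linarith
            · -- n - p ≥ 2 : induction hypothesis on the shifted subchain
              have hsub := ih (n - p) (fun j => f (p + j)) (t - csum ρ f p) (ℓ/2) g
                (by omega)
                (fun i hi => by
                  rw [mid_shift]
                  constructor
                  · have : t ≤ mid ρ f (p + i) := le_trans hpt (mid_mono h0 f (by omega))
                    linarith
                  · have h5 := (hcont (p + i) (by omega)).2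
                    rw [ht]
                    linarith)
                (fun i hi => by
                  rw [mid_shift, mid_shift]
                  have hg := hgap (p + i) (by omega)
                  have : p + (i + 1) = p + i + 1 := by ring
                  rw [this]
                  linarith)
                hlg'
              have hfp : (fun j => f (p + j)) 0 = f p := by simp
              have hfn : (fun j => f (p + j)) (n - p) = f n := by
                simp only []
                congr 1
                omega
              simp only [Nat.add_zero, show p + (n - p) = n by omega] at hsub
              linarith
          calc ρ (f 0) (f n) ≤ 2 * max (ρ (f 0) (f p)) (ρ (f p) (f n)) := hq _ _ _
            _ ≤ 2 * (2 * ℓ) := by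
                apply mul_le_mul_of_nonneg_left (max_le hleft hright) (by norm_num)
            _ = 4 * ℓ := by ring

/-- The main chain bound, for quasimetrics uniformly bounded below. -/
private lemma gm_main {ε : ℝ} (hε : 0 < ε) (h0 : ∀ a b, ε ≤ ρ a b)
    (hq : ∀ a b c, ρ a c ≤ 2 * max (ρ a b) (ρ b c))
    (n : ℕ) (f : ℕ → Y) (hn : 2 ≤ n) :
    ρ (f 0) (f n) ≤ 4 * csum ρ f n := by
  have h0' : ∀ a b, 0 ≤ ρ a b := fun a b => le_trans hε.le (h0 a b)
  have hcont : ∀ i < n, (0:ℝ) ≤ mid ρ f i ∧ mid ρ f i < 0 + csum ρ f n := by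
    intro i hi
    constructor
    · have hca : (0:ℝ) ≤ csum ρ f i := Finset.sum_nonneg fun j _ => h0' _ _
      have hcb := h0' (f i) (f (i+1))
      unfold mid
      linarith
    · have hle : csum ρ f (i+1) ≤ csum ρ f n := by
        unfold csum
        apply Finset.sum_le_sum_of_subset_of_nonneg
        · exact Finset.range_subset_range.2 hi
        · intro j _ _; exact h0' _ _
      rw [csum_succ] at hle
      have hρpos := lt_of_lt_of_le hε (h0 (f i) (f (i+1)))
      unfold mid
      linarith
  have hgap : ∀ i, i + 1 < n → ε ≤ mid ρ f (i+1) - mid ρ f i := by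
    intro i hi
    have hs := mid_spread h0' f (show i < i + 1 by omega)
    have hb1 := h0 (f i) (f (i+1))
    have hb2 := h0 (f (i+1)) (f (i+1+1))
    linarith
  obtain ⟨k, hk⟩ := pow_unbounded_of_one_lt (csum ρ f n / ε) (by norm_num : (1:ℝ) < 2)
  have hSk : csum ρ f n ≤ 2 ^ k * ε := by
    rw [div_lt_iff₀ hε] at hk
    linarith
  exact gmB h0' hq k n f 0 (csum ρ f n) ε hn hcont hgap hSk

private lemma csum_add_const (f : ℕ → Y) (n : ℕ) (ε : ℝ) :
    csum (fun a b => ρ a b + ε) f n = csum ρ f n + n * ε := by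
  show (∑ i ∈ Finset.range n, (ρ (f i) (f (i+1)) + ε)) = _
  rw [Finset.sum_add_distrib, Finset.sum_const, Finset.card_range, nsmul_eq_mul]
  rfl

/-- Frink's lemma for chains given by functions. -/
private lemma frink_fun (h0 : ∀ a b, 0 ≤ ρ a b)
    (hq : ∀ a b c, ρ a c ≤ 2 * max (ρ a b) (ρ b c))
    (n : ℕ) (f : ℕ → Y) (hn : 1 ≤ n) :
    ρ (f 0) (f n) ≤ 4 * csum ρ f n := by
  rcases eq_or_lt_of_le hn with h1 | h1
  · rw [← h1]
    have hone : csum ρ f 1 = ρ (f 0) (f 1) := by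
      unfold csum; rw [Finset.sum_range_one]
    rw [hone]
    linarith [h0 (f 0) (f 1)]
  · have hn2 : 2 ≤ n := h1
    refine le_of_forall_pos_le_add fun ε hε => ?_
    set ε' := ε / (4 * n + 1) with hε'
    have hε'pos : 0 < ε' := by rw [hε']; positivity
    have h0' : ∀ a b, ε' ≤ (fun a b => ρ a b + ε') a b := fun a b => by
      have := h0 a b; simp only []; linarith
    have hq' : ∀ a b c, (fun a b => ρ a b + ε') a c ≤
        2 * max ((fun a b => ρ a b + ε') a b) ((fun a b => ρ a b + ε') b c) := by
      intro a b c
      have hq0 := hq a b c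
      have hmax : max (ρ a b + ε') (ρ b c + ε') = max (ρ a b) (ρ b c) + ε' :=
        max_add_add_right _ _ _
      simp only []
      rw [hmax]
      linarith
    have hmain := gm_main hε'pos h0' hq' n f hn2
    rw [csum_add_const] at hmain
    have hmain' : ρ (f 0) (f n) + ε' ≤ 4 * (csum ρ f n + n * ε') := hmain
    have heq : (4 * (n:ℝ) + 1) * ε' = ε := by
      rw [hε']; field_simp
    nlinarith [hε'pos, hmain']

end Frink

section AuxDbar

open Filter

variable {X : Type*} [MetricSpace X]

private lemma chainSum_cons (x₀ : X) (b : ℝ) (a a' : Bord x₀) (t : List (Bord x₀)) :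
    chainSum x₀ b (a :: a' :: t) = rho x₀ b a a' + chainSum x₀ b (a' :: t) := by
  unfold chainSum
  rw [show (a :: a' :: t).tail = a' :: t from rfl, show (a' :: t).tail = t from rfl]
  rw [List.zip_cons_cons, List.map_cons, List.sum_cons]

private lemma chainSum_formula (x₀ : X) (b : ℝ) :
    ∀ (t : List (Bord x₀)) (a : Bord x₀),
      chainSum x₀ b (a :: t) =
        ∑ i ∈ Finset.range t.length,
          rho x₀ b ((a :: t).getD i a) ((a :: t).getD (i+1) a) := by
  intro t
  induction t with
  | nil => intro a; simp [chainSum]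
  | cons a' t' ih =>
      intro a
      rw [chainSum_cons, ih a']
      rw [show (a' :: t').length = t'.length + 1 from rfl]
      rw [Finset.sum_range_succ']
      have hterm : ∀ i ∈ Finset.range t'.length,
          rho x₀ b ((a :: a' :: t').getD (i+1) a) ((a :: a' :: t').getD (i+1+1) a)
          = rho x₀ b ((a' :: t').getD i a') ((a' :: t').getD (i+1) a') := by
        intro i hi
        rw [Finset.mem_range] at hi
        have e1 : (a :: a' :: t').getD (i+1) a = (a' :: t').getD i a := by simp
        have e2 : (a :: a' :: t').getD (i+1+1) a = (a' :: t').getD (i+1) a := by simp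
        have l1 : i < (a' :: t').length := by simp; omega
        have l2 : i + 1 < (a' :: t').length := by simp; omega
        rw [e1, e2, List.getD_eq_getElem _ a l1, List.getD_eq_getElem _ a l2,
          ← List.getD_eq_getElem _ a' l1, ← List.getD_eq_getElem _ a' l2]
      rw [Finset.sum_congr rfl hterm]
      have h0' : rho x₀ b ((a :: a' :: t').getD 0 a) ((a :: a' :: t').getD (0+1) a)
          = rho x₀ b a a' := by simp
      rw [h0']
      ring

lemma chainSum_nonneg {b : ℝ} (hb : 1 < b) (x₀ : X) (l : List (Bord x₀)) :
    0 ≤ chainSum x₀ b l := by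
  unfold chainSum
  apply List.sum_nonneg
  intro x hx
  obtain ⟨p, _, rfl⟩ := List.mem_map.1 hx
  exact rho_nonneg hb x₀ _ _

/-- Frink's lemma: the `ρ`-distance is at most 4 times any chain sum. -/
lemma rho_le_four_chainSum {δ b : ℝ} (hδ : 0 < δ) (hb : 1 < b) (hb2 : b ≤ (2:ℝ) ^ (1/δ))
    (hhyp : IsHyperbolic X δ) (x₀ : X) {ξ η : Bord x₀} (hne : ξ ≠ η)
    {l : List (Bord x₀)} (h1 : l.head? = some ξ) (h2 : l.getLast? = some η) :
    rho x₀ b ξ η ≤ 4 * chainSum x₀ b l := by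
  match l with
  | [] => simp at h1
  | a :: t =>
    have ha : a = ξ := by simpa using h1
    subst ha
    have hlast : (a :: t).getLast (by simp) = η := by
      have := List.getLast?_eq_getLast (l := a :: t) (by simp)
      rw [this] at h2
      exact Option.some.inj h2
    have htne : t ≠ [] := by
      rintro rfl
      simp at hlast
      exact hne hlast
    have hlen : 1 ≤ t.length := by
      cases t; simp at htne; simp
    set f : ℕ → Bord x₀ := fun i => (a :: t).getD i a with hf
    have hf0 : f 0 = a := by simp [hf]
    have hfn : f t.length = η := by
      show (a :: t).getD t.length a = η
      have hlt : t.length < (a :: t).length := by simp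
      have hgl : (a :: t).getD t.length a = (a :: t).getLast (by simp) := by
        rw [List.getD_eq_getElem _ a hlt, List.getLast_eq_getElem]
        congr 1
      rw [hgl, hlast]
    have hchain := chainSum_formula x₀ b t a
    have hfr := frink_fun (rho_nonneg hb x₀) (fun p q r => rho_quasi hδ hb hb2 hhyp x₀ p q r)
      t.length f hlen
    rw [hf0, hfn] at hfr
    rw [hchain]
    exact hfr

lemma dbar_nonneg {b : ℝ} (hb : 1 < b) (x₀ : X) (ξ η : Bord x₀) :
    0 ≤ Dbar x₀ b ξ η := by
  unfold Dbar
  apply Real.sInf_nonneg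
  rintro s ⟨l, _, _, rfl⟩
  exact chainSum_nonneg hb x₀ l

lemma dbar_set_nonempty (x₀ : X) (b : ℝ) (ξ η : Bord x₀) :
    {s : ℝ | ∃ l : List (Bord x₀), l.head? = some ξ ∧ l.getLast? = some η ∧
      s = chainSum x₀ b l}.Nonempty :=
  ⟨chainSum x₀ b [ξ, η], [ξ, η], rfl, rfl, rfl⟩

lemma dbar_le_rho {b : ℝ} (hb : 1 < b) (x₀ : X) (ξ η : Bord x₀) :
    Dbar x₀ b ξ η ≤ rho x₀ b ξ η := by
  unfold Dbar
  have hmem : rho x₀ b ξ η ∈ {s : ℝ | ∃ l : List (Bord x₀), l.head? = some ξ ∧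
      l.getLast? = some η ∧ s = chainSum x₀ b l} := by
    refine ⟨[ξ, η], rfl, rfl, ?_⟩
    unfold chainSum
    simp
  apply csInf_le _ hmem
  exact ⟨0, fun s hs => by
    obtain ⟨l, _, _, rfl⟩ := hs
    exact chainSum_nonneg hb x₀ l⟩

lemma rho_le_four_dbar {δ b : ℝ} (hδ : 0 < δ) (hb : 1 < b) (hb2 : b ≤ (2:ℝ) ^ (1/δ))
    (hhyp : IsHyperbolic X δ) (x₀ : X) {ξ η : Bord x₀} (hne : ξ ≠ η) :
    rho x₀ b ξ η ≤ 4 * Dbar x₀ b ξ η := by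
  unfold Dbar
  have h4 : rho x₀ b ξ η / 4 ≤ sInf {s : ℝ | ∃ l : List (Bord x₀), l.head? = some ξ ∧
      l.getLast? = some η ∧ s = chainSum x₀ b l} := by
    apply le_csInf (dbar_set_nonempty x₀ b ξ η)
    rintro s ⟨l, h1, h2, rfl⟩
    have := rho_le_four_chainSum hδ hb hb2 hhyp x₀ hne h1 h2
    linarith
  linarith

lemma dbar_self (x₀ : X) {b : ℝ} (hb : 1 < b) (ξ : Bord x₀) : Dbar x₀ b ξ ξ = 0 := by
  refine le_antisymm ?_ (dbar_nonneg hb x₀ ξ ξ)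
  unfold Dbar
  have hmem : (0:ℝ) ∈ {s : ℝ | ∃ l : List (Bord x₀), l.head? = some ξ ∧
      l.getLast? = some ξ ∧ s = chainSum x₀ b l} := ⟨[ξ], rfl, rfl, by simp [chainSum]⟩
  apply csInf_le _ hmem
  exact ⟨0, fun s hs => by
    obtain ⟨l, _, _, rfl⟩ := hs
    exact chainSum_nonneg hb x₀ l⟩

end AuxDbar

section AuxIsom

open Filter

variable {X : Type*} [MetricSpace X] {x₀ : X} {δ : ℝ}

set_option maxHeartbeats 1000000 in
lemma seqSet_map (hhyp : IsHyperbolic X δ) (g : X ≃ᵢ X) (α : Bord x₀) {v : ℕ → X} :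
    v ∈ SeqSet x₀ (bordMap x₀ g α) ↔ ∃ u ∈ SeqSet x₀ α, v = fun n => g (u n) := by
  cases α with
  | inl x =>
      show v ∈ SeqSet x₀ (Sum.inl (g x)) ↔ _
      constructor
      · intro hv
        have hv' : v = fun _ => g x := hv
        exact ⟨fun _ => x, rfl, hv'⟩
      · rintro ⟨u, hu, rfl⟩
        have hu' : u = fun _ => x := hu
        subst hu'
        rfl
  | inr ξ =>
      show v ∈ SeqSet x₀ (Sum.inr (bMap x₀ g ξ)) ↔ _
      obtain ⟨u₀, hu₀⟩ := Quot.exists_rep ξ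
      constructor
      · rintro ⟨hv, hQ⟩
        have hbm : bMap x₀ g ξ = Quot.mk (bRel x₀)
            ⟨fun n => g (u₀.1 n), isGromovSeq_isom x₀ g u₀.2⟩ := by
          rw [← hu₀]; rfl
        rw [hbm] at hQ
        have hrel : GromovEquiv x₀ v (fun n => g (u₀.1 n)) := (class_eq_iff hhyp).1 hQ
        have hrel2 := gromovEquiv_isom x₀ g.symm hrel
        simp only [IsometryEquiv.symm_apply_apply] at hrel2
        refine ⟨fun n => g.symm (v n), ⟨isGromovSeq_isom x₀ g.symm hv, ?_⟩, ?_⟩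
        · rw [← hu₀]
          apply Quot.sound
          exact hrel2
        · funext n; simp
      · rintro ⟨u, ⟨hu, hQ⟩, rfl⟩
        refine ⟨isGromovSeq_isom x₀ g hu, ?_⟩
        rw [← hQ]
        rfl

lemma bordMap_leftinv (g : X ≃ᵢ X) (ξ : Bord x₀) :
    bordMap x₀ g.symm (bordMap x₀ g ξ) = ξ := by
  cases ξ with
  | inl x =>
      show Sum.inl (g.symm (g x)) = Sum.inl x
      simp
  | inr ζ =>
      show Sum.inr (bMap x₀ g.symm (bMap x₀ g ζ)) = Sum.inr ζ
      congr 1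
      induction ζ using Quot.ind with
      | _ u =>
        show Quot.mk (bRel x₀) _ = _
        apply congrArg (Quot.mk (bRel x₀))
        apply Subtype.ext
        funext n
        exact g.symm_apply_apply _

lemma bordMap_inj (g : X ≃ᵢ X) {ξ η : Bord x₀} (h : bordMap x₀ g ξ = bordMap x₀ g η) :
    ξ = η := by
  have := congrArg (bordMap x₀ g.symm) h
  rwa [bordMap_leftinv, bordMap_leftinv] at this

lemma egp_conj (hhyp : IsHyperbolic X δ) (g : X ≃ᵢ X) (α β : Bord x₀) :
    egp x₀ (bordMap x₀ g α) (bordMap x₀ g β) x₀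
      = sInf {t | ∃ u ∈ SeqSet x₀ α, ∃ v ∈ SeqSet x₀ β,
          t = liminf (fun p : ℕ × ℕ => ((gp (u p.1) (v p.2) (g.symm x₀) : ℝ) : EReal)) atTop} := by
  rw [egp_eq]
  congr 1
  ext t
  simp only [egpSet, Set.mem_setOf_eq]
  constructor
  · rintro ⟨u', hu', v', hv', rfl⟩
    obtain ⟨u, hu, rfl⟩ := (seqSet_map hhyp g α).1 hu'
    obtain ⟨v, hv, rfl⟩ := (seqSet_map hhyp g β).1 hv'
    refine ⟨u, hu, v, hv, ?_⟩
    congr 1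
    funext p
    show ((gp (g (u p.1)) (g (v p.2)) x₀ : ℝ) : EReal) = _
    rw [gp_isom]
  · rintro ⟨u, hu, v, hv, rfl⟩
    refine ⟨_, (seqSet_map hhyp g α).2 ⟨u, hu, rfl⟩, _, (seqSet_map hhyp g β).2 ⟨v, hv, rfl⟩, ?_⟩
    congr 1
    funext p
    show ((gp (u p.1) (v p.2) (g.symm x₀) : ℝ) : EReal)
      = ((gp (g (u p.1)) (g (v p.2)) x₀ : ℝ) : EReal)
    rw [gp_isom]

end AuxIsom

section AuxHoro

open Filter

variable {X : Type*} [MetricSpace X] {x₀ : X} {δ : ℝ}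

lemma horo_approx {h : X → ℝ} (hh : h ∈ Xh x₀) (a b c : X) {ε : ℝ} (hε : 0 < ε) :
    ∃ x : X, |h a - hfun x₀ x a| < ε ∧ |h b - hfun x₀ x b| < ε ∧ |h c - hfun x₀ x c| < ε := by
  have hcl : h ∈ closure (Set.range (hfun x₀)) := hh
  set U : Set (X → ℝ) := {f | |h a - f a| < ε ∧ |h b - f b| < ε ∧ |h c - f c| < ε} with hU
  have hUopen : IsOpen U := by
    have hone : ∀ w : X, IsOpen {f : X → ℝ | |h w - f w| < ε} := by
      intro w
      have hrw : {f : X → ℝ | |h w - f w| < ε} = (fun f : X → ℝ => f w) ⁻¹' Metric.ball (h w) ε := by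
        ext f
        simp only [Set.mem_setOf_eq, Set.mem_preimage, Metric.mem_ball, Real.dist_eq,
          abs_sub_comm]
      rw [hrw]
      exact Metric.isOpen_ball.preimage (continuous_apply w)
    exact ((hone a).inter ((hone b).inter (hone c)))
  have hhU : h ∈ U := by
    refine ⟨?_, ?_, ?_⟩ <;> simpa using hε
  obtain ⟨f, hfU, hfr⟩ := _root_.mem_closure_iff.1 hcl U hUopen hhU
  obtain ⟨x, rfl⟩ := hfr
  exact ⟨x, hfU⟩

lemma horo_abs {h : X → ℝ} (hh : h ∈ Xh x₀) (y : X) : |h y| ≤ dist y x₀ := by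
  refine le_of_forall_pos_le_add fun ε hε => ?_
  obtain ⟨x, h1, -, -⟩ := horo_approx hh y y y (half_pos hε)
  rw [abs_lt] at h1
  have e3 : |hfun x₀ x y| ≤ dist y x₀ := by
    have he : hfun x₀ x y = dist y x - dist x₀ x := by simp [hfun, dist_comm]
    rw [he]
    exact abs_dist_sub_le y x₀ x
  rw [abs_le] at e3
  rw [abs_le]
  constructor <;> linarith [h1.1, h1.2, e3.1, e3.2]

lemma horo_lip {h : X → ℝ} (hh : h ∈ Xh x₀) (y z : X) : |h y - h z| ≤ dist y z := by
  refine le_of_forall_pos_le_add fun ε hε => ?_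
  obtain ⟨x, h1, h2, -⟩ := horo_approx hh y z z (half_pos hε)
  rw [abs_lt] at h1 h2
  have e3 : |hfun x₀ x y - hfun x₀ x z| ≤ dist y z := by
    have he : hfun x₀ x y - hfun x₀ x z = dist y x - dist z x := by simp [hfun]
    rw [he]
    exact abs_dist_sub_le y z x
  rw [abs_le] at e3
  rw [abs_le]
  constructor <;> linarith [h1.1, h1.2, h2.1, h2.2, e3.1, e3.2]

/-- Points where `h` is very negative have Gromov product with `y` bounded by `(d(y,x₀)-h(y))/2 + δ`. -/
lemma horo_U1 (hδ : 0 < δ) (hhyp : IsHyperbolic X δ) {h : X → ℝ} (hh : h ∈ Xh x₀)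
    (y z : X) (hz : h z < -(dist y x₀) - 2*δ - 1) :
    gp y z x₀ ≤ (dist y x₀ - h y)/2 + δ := by
  have key : ∀ ε : ℝ, 0 < ε → ε ≤ 1 → gp y z x₀ ≤ (dist y x₀ - h y)/2 + δ + ε := by
    intro ε hε hε1
    obtain ⟨x, h1, h2, -⟩ := horo_approx hh y z z (half_pos hε)
    rw [abs_lt] at h1 h2
    have e1 : hfun x₀ x y = dist y x₀ - 2 * gp y x x₀ := hfun_eq x₀ x y
    have e2 : hfun x₀ x z = dist z x₀ - 2 * gp z x x₀ := hfun_eq x₀ x z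
    have habsz : |h z| ≤ dist z x₀ := horo_abs hh z
    have habsy : |h y| ≤ dist y x₀ := horo_abs hh y
    rw [abs_le] at habsz habsy
    have hhyp1 := hhyp y z x x₀
    rcases le_total (gp y z x₀) (gp z x x₀) with hmin | hmin
    · rw [min_eq_left hmin] at hhyp1
      linarith [h1.1, h1.2]
    · rw [min_eq_right hmin] at hhyp1
      exfalso
      linarith [h1.1, h1.2, h2.1, h2.2, habsz.1, habsy.1]
  by_contra hc
  push_neg at hc
  set ε := min 1 ((gp y z x₀ - ((dist y x₀ - h y)/2 + δ))/2) with hε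
  have hεpos : 0 < ε := by
    apply lt_min one_pos
    linarith
  have hε1 : ε ≤ 1 := min_le_left _ _
  have := key ε hεpos hε1
  have hεle : ε ≤ (gp y z x₀ - ((dist y x₀ - h y)/2 + δ))/2 := min_le_right _ _
  linarith

/-- Existence of arbitrarily deep points with large Gromov product with `y`. -/
lemma horo_E1 (hδ : 0 < δ) (hhyp : IsHyperbolic X δ) (hgeo : IsGeodesic X) {h : X → ℝ}
    (hh : h ∈ Xh x₀) (hub : ¬ BddBelow (Set.range h)) (y : X) (M : ℝ)
    {ε : ℝ} (hε : 0 < ε) (hε1 : ε ≤ 1) :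
    ∃ z : X, h z ≤ -M ∧ (dist y x₀ - h y)/2 - δ - ε ≤ gp y z x₀ := by
  set T := (dist y x₀ - h y)/2 with hT
  have habsy : |h y| ≤ dist y x₀ := horo_abs hh y
  rw [abs_le] at habsy
  have hTnn : 0 ≤ T := by rw [hT]; linarith [habsy.1]
  set t := T + max M 0 + 2*δ + 2 with ht
  have htpos : 0 < t := by
    have := le_max_right M (0:ℝ)
    rw [ht]; linarith
  obtain ⟨v, hvmem, hvlt⟩ := not_bddBelow_iff.1 hub (-(2*t + 2))
  obtain ⟨z₀, rfl⟩ := hvmem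
  obtain ⟨x, hxy, hxz, -⟩ := horo_approx hh y z₀ z₀ (half_pos hε)
  rw [abs_lt] at hxy hxz
  have ey : hfun x₀ x y = dist y x₀ - 2 * gp y x x₀ := hfun_eq _ _ _
  have ez : hfun x₀ x z₀ = dist z₀ x₀ - 2 * gp z₀ x x₀ := hfun_eq _ _ _
  have habsz : |h z₀| ≤ dist z₀ x₀ := horo_abs hh z₀
  rw [abs_le] at habsz
  have hgpzx : 2*t + 1 ≤ gp z₀ x x₀ := by linarith [hxz.1, hxz.2, habsz.1]
  have hgpyx : T - ε/4 ≤ gp y x x₀ := by rw [hT]; linarith [hxy.1, hxy.2]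
  have hdx : t ≤ dist x₀ x := by
    have h5 : gp z₀ x x₀ ≤ dist x x₀ := gp_le_dist z₀ x x₀
    rw [dist_comm x₀ x]
    linarith
  obtain ⟨γ, hγ0, hγd, hγiso⟩ := hgeo x₀ x
  set w := γ t with hw
  have hdw : dist w x₀ = t := by
    have hmem1 : t ∈ Set.Icc (0:ℝ) (dist x₀ x) := ⟨htpos.le, hdx⟩
    have hmem0 : (0:ℝ) ∈ Set.Icc (0:ℝ) (dist x₀ x) := ⟨le_rfl, dist_nonneg⟩
    have := hγiso t hmem1 0 hmem0
    rw [hγ0] at this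
    rw [hw, this]
    simp [abs_of_nonneg htpos.le]
  have hdwx : dist w x = dist x₀ x - t := by
    have hmem1 : t ∈ Set.Icc (0:ℝ) (dist x₀ x) := ⟨htpos.le, hdx⟩
    have hmemd : dist x₀ x ∈ Set.Icc (0:ℝ) (dist x₀ x) := ⟨dist_nonneg, le_rfl⟩
    have := hγiso t hmem1 (dist x₀ x) hmemd
    rw [hγd] at this
    rw [hw, this, abs_of_nonpos (by linarith)]
    ring
  have hgpwx : gp w x x₀ = t := by
    simp only [gp]
    rw [hdw, hdwx, dist_comm x x₀]
    ring
  obtain ⟨x', hxy', hxz', hxw'⟩ := horo_approx hh y z₀ w (half_pos hε)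
  rw [abs_lt] at hxy' hxz' hxw'
  have ey' : hfun x₀ x' y = dist y x₀ - 2 * gp y x' x₀ := hfun_eq _ _ _
  have ez' : hfun x₀ x' z₀ = dist z₀ x₀ - 2 * gp z₀ x' x₀ := hfun_eq _ _ _
  have ew' : hfun x₀ x' w = dist w x₀ - 2 * gp w x' x₀ := hfun_eq _ _ _
  have hgpzx' : 2*t + 1 ≤ gp z₀ x' x₀ := by linarith [hxz'.1, hxz'.2, habsz.1]
  have hgpyx' : T - ε/4 ≤ gp y x' x₀ := by rw [hT]; linarith [hxy'.1, hxy'.2]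
  have h5 := hhyp x z₀ x' x₀
  have hxzc : gp x z₀ x₀ = gp z₀ x x₀ := gp_comm' _ _ _
  have hgpxx' : 2*t + 1 - δ ≤ gp x x' x₀ := by
    have hmin : 2*t+1 ≤ min (gp x z₀ x₀) (gp z₀ x' x₀) := le_min (by rw [hxzc]; linarith) hgpzx'
    linarith
  have h6 := hhyp w x x' x₀
  have hgpwx' : t - δ ≤ gp w x' x₀ := by
    have hmin : t - δ + δ ≤ min (gp w x x₀) (gp x x' x₀) := by
      apply le_min
      · rw [hgpwx]; linarith
      · linarith [le_max_right M (0:ℝ), hTnn, hgpxx', hδ]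
    linarith
  have hhw : h w ≤ -M := by
    have hM := le_max_left M (0:ℝ)
    have hlt : h w < hfun x₀ x' w + ε/2 := by linarith [hxw'.2]
    rw [ew', hdw] at hlt
    linarith [hgpwx', hM, hTnn, hε1]
  have h7 := hhyp y x' w x₀
  have hcomm : gp x' w x₀ = gp w x' x₀ := gp_comm' _ _ _
  have hfinal : T - δ - ε ≤ gp y w x₀ := by
    have hmin : T - ε/4 ≤ min (gp y x' x₀) (gp x' w x₀) := by
      apply le_min hgpyx'
      rw [hcomm]
      linarith [hgpwx', hTnn, le_max_right M (0:ℝ), hδ]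
    linarith
  exact ⟨w, hhw, by linarith⟩

end AuxHoro

section AuxRep

open Filter

variable {X : Type*} [MetricSpace X] {x₀ : X} {δ b : ℝ}

set_option maxHeartbeats 1000000 in
lemma class_of_deep (lm : (X → ℝ) → Bdry x₀ b) (hinv : Bdry x₀ b → (X → ℝ))
    (hBA : BasicAssumption x₀ b lm hinv) (ξ : GromovBoundary x₀) {z : ℕ → X}
    (hz : Tendsto (fun k => hinv (Bdry.ofB x₀ b ξ) (z k)) atTop atBot) :
    ∃ hg : IsGromovSeq x₀ z, Quot.mk (bRel x₀) ⟨z, hg⟩ = ξ := by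
  obtain ⟨hg, heq⟩ := hBA.localMin _ (hBA.inv_mem (Bdry.ofB x₀ b ξ)) z hz
  refine ⟨hg, ?_⟩
  rw [← heq, hBA.right_inv]
  rfl

lemma transfer (hδ : 0 ≤ δ) (hhyp : IsHyperbolic X δ) {u z : ℕ → X} (hu : IsGromovSeq x₀ u)
    (he : Tendsto (fun n => gp (u n) (z n) x₀) atTop atTop) (L : ℝ) :
    ∃ k, ∀ᶠ n in atTop, L ≤ gp (z k) (u n) x₀ := by
  obtain ⟨N1, hN1⟩ := isGromovSeq_iff.1 hu (L + 2*δ)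
  obtain ⟨N2, hN2⟩ := eventually_atTop.1 (tendsto_atTop.1 he (L + 2*δ))
  refine ⟨max N1 N2, eventually_atTop.2 ⟨max N1 N2, fun n hn => ?_⟩⟩
  set j := max N1 N2 with hj
  have h1 : L + 2*δ ≤ gp (u j) (z j) x₀ := hN2 j (le_max_right _ _)
  have h2 : L + 2*δ ≤ gp (u j) (u n) x₀ :=
    hN1 j n (le_max_left _ _) (le_trans (le_max_left _ _) hn)
  have h3 := hhyp (z j) (u j) (u n) x₀
  have h1' : gp (z j) (u j) x₀ = gp (u j) (z j) x₀ := gp_comm' _ _ _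
  have hmin : L + 2*δ ≤ min (gp (z j) (u j) x₀) (gp (u j) (u n) x₀) :=
    le_min (by rw [h1']; exact h1) h2
  linarith

lemma tendsto_deep {h : X → ℝ} {z : ℕ → X} {c : ℝ}
    (hz : ∀ k : ℕ, h (z k) ≤ min (-(k:ℝ)) c) :
    Tendsto (fun k => h (z k)) atTop atBot := by
  apply tendsto_atBot_mono (fun k => le_trans (hz k) (min_le_left _ _))
  exact tendsto_neg_atTop_atBot.comp (tendsto_natCast_atTop_atTop (R := ℝ))

set_option maxHeartbeats 1000000 in
lemma rep_upper (hδ : 0 < δ) (hhyp : IsHyperbolic X δ)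
    (lm : (X → ℝ) → Bdry x₀ b) (hinv : Bdry x₀ b → (X → ℝ))
    (hBA : BasicAssumption x₀ b lm hinv)
    (ξ : GromovBoundary x₀) {u : ℕ → X} (hu : u ∈ SeqSet x₀ (Sum.inr ξ)) (y : X) :
    ∀ᶠ n in atTop,
      gp y (u n) x₀ ≤ (dist y x₀ - hinv (Bdry.ofB x₀ b ξ) y)/2 + 2*δ := by
  set h := hinv (Bdry.ofB x₀ b ξ) with hdef
  obtain ⟨hXh, hub⟩ := hBA.inv_mem (Bdry.ofB x₀ b ξ)
  have hdeep : ∀ k : ℕ, ∃ w : X, h w ≤ min (-(k:ℝ)) (-(dist y x₀) - 2*δ - 2) := by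
    intro k
    obtain ⟨v, hvmem, hvlt⟩ := not_bddBelow_iff.1 hub (min (-(k:ℝ)) (-(dist y x₀) - 2*δ - 2))
    obtain ⟨w, rfl⟩ := hvmem
    exact ⟨w, hvlt.le⟩
  choose z hz using hdeep
  obtain ⟨hzg, hzQ⟩ := class_of_deep lm hinv hBA ξ (tendsto_deep hz)
  obtain ⟨hug, huQ⟩ := hu
  have hequiv : GromovEquiv x₀ u z := (class_eq_iff hhyp).1 (huQ.trans hzQ.symm)
  obtain ⟨k, hk⟩ := transfer hδ.le hhyp hug hequiv (dist y x₀ + 2*δ + 1)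
  filter_upwards [hk] with n hn
  have hzdeep : h (z k) < -(dist y x₀) - 2*δ - 1 :=
    lt_of_le_of_lt (le_trans (hz k) (min_le_right _ _)) (by linarith)
  have hU1 : gp y (z k) x₀ ≤ (dist y x₀ - h y)/2 + δ := horo_U1 hδ hhyp hXh y (z k) hzdeep
  have h8 := hhyp y (u n) (z k) x₀
  have hT : (dist y x₀ - h y)/2 ≤ dist y x₀ := by
    have := horo_abs hXh y
    rw [abs_le] at this
    linarith [this.1]
  rcases le_total (gp y (u n) x₀) (gp (u n) (z k) x₀) with hc | hc
  · rw [min_eq_left hc] at h8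
    linarith
  · rw [min_eq_right hc] at h8
    exfalso
    have hcm : gp (u n) (z k) x₀ = gp (z k) (u n) x₀ := gp_comm' _ _ _
    linarith

set_option maxHeartbeats 1000000 in
lemma rep_lower (hδ : 0 < δ) (hhyp : IsHyperbolic X δ) (hgeo : IsGeodesic X)
    (lm : (X → ℝ) → Bdry x₀ b) (hinv : Bdry x₀ b → (X → ℝ))
    (hBA : BasicAssumption x₀ b lm hinv)
    (ξ : GromovBoundary x₀) {u : ℕ → X} (hu : u ∈ SeqSet x₀ (Sum.inr ξ)) (y : X)
    {ε : ℝ} (hε : 0 < ε) (hε1 : ε ≤ 1) :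
    ∀ᶠ n in atTop,
      (dist y x₀ - hinv (Bdry.ofB x₀ b ξ) y)/2 - 2*δ - ε ≤ gp y (u n) x₀ := by
  set h := hinv (Bdry.ofB x₀ b ξ) with hdef
  obtain ⟨hXh, hub⟩ := hBA.inv_mem (Bdry.ofB x₀ b ξ)
  set T := (dist y x₀ - h y)/2 with hT
  have hdeep : ∀ k : ℕ, ∃ w : X,
      h w ≤ min (-(k:ℝ)) 0 ∧ T - δ - ε ≤ gp y w x₀ := by
    intro k
    obtain ⟨w, hw1, hw2⟩ := horo_E1 hδ hhyp hgeo hXh hub y (max (k:ℝ) 0) hε hε1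
    refine ⟨w, ?_, hw2⟩
    have hk0 : (0:ℝ) ≤ (k:ℝ) := Nat.cast_nonneg k
    have h1 : -(max (k:ℝ) 0) ≤ min (-(k:ℝ)) 0 := by
      rw [max_eq_left hk0, min_eq_left (by linarith)]
    linarith
  choose z hz1 hz2 using hdeep
  obtain ⟨hzg, hzQ⟩ := class_of_deep lm hinv hBA ξ (tendsto_deep hz1)
  obtain ⟨hug, huQ⟩ := hu
  have hequiv : GromovEquiv x₀ u z := (class_eq_iff hhyp).1 (huQ.trans hzQ.symm)
  obtain ⟨k, hk⟩ := transfer hδ.le hhyp hug hequiv (max T 0)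
  filter_upwards [hk] with n hn
  have h8 := hhyp y (z k) (u n) x₀
  have hmin : T - δ - ε ≤ min (gp y (z k) x₀) (gp (z k) (u n) x₀) := by
    apply le_min (hz2 k)
    have := le_max_left T (0:ℝ)
    linarith
  linarith

/-- Comparison between `h_{u_n}(y)` and `h_α(y)` along representative sequences. -/
lemma hcomp (hδ : 0 < δ) (hhyp : IsHyperbolic X δ) (hgeo : IsGeodesic X)
    (lm : (X → ℝ) → Bdry x₀ b) (hinv : Bdry x₀ b → (X → ℝ))
    (hBA : BasicAssumption x₀ b lm hinv)
    (α : Bord x₀) {u : ℕ → X} (hu : u ∈ SeqSet x₀ α) (y : X)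
    {ε : ℝ} (hε : 0 < ε) (hε1 : ε ≤ 1) :
    ∀ᶠ n in atTop, |hfun x₀ (u n) y - hB x₀ b hinv α y| ≤ 4*δ + 2*ε := by
  cases α with
  | inl x =>
      have hu' : u = fun _ => x := hu
      subst hu'
      apply Eventually.of_forall
      intro n
      show |hfun x₀ x y - hfun x₀ x y| ≤ _
      simp
      positivity
  | inr ξ =>
      have hup := rep_upper hδ hhyp lm hinv hBA ξ hu y
      have hlo := rep_lower hδ hhyp hgeo lm hinv hBA ξ hu y hε hε1
      filter_upwards [hup, hlo] with n h1 h2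
      have heq : hfun x₀ (u n) y = dist y x₀ - 2 * gp y (u n) x₀ := hfun_eq _ _ _
      have hBval : hB x₀ b hinv (Sum.inr ξ) y = hinv (Bdry.ofB x₀ b ξ) y := rfl
      rw [hBval, abs_le]
      constructor <;> linarith

end AuxRep

section AuxConj

open Filter

variable {X : Type*} [MetricSpace X] {x₀ : X} {δ b : ℝ}

lemma egp_conj_le (hδ : 0 < δ) (hhyp : IsHyperbolic X δ) (hgeo : IsGeodesic X)
    (lm : (X → ℝ) → Bdry x₀ b) (hinv : Bdry x₀ b → (X → ℝ))
    (hBA : BasicAssumption x₀ b lm hinv) (g : X ≃ᵢ X) (α β : Bord x₀) :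
    egp x₀ (bordMap x₀ g α) (bordMap x₀ g β) x₀
      ≤ egp x₀ α β x₀ +
        (((hB x₀ b hinv α (g.symm x₀) + hB x₀ b hinv β (g.symm x₀))/2 + 5*δ : ℝ) : EReal) := by
  set y := g.symm x₀ with hy
  set C0 : ℝ := (hB x₀ b hinv α y + hB x₀ b hinv β y)/2 with hC0
  by_cases hT : egp x₀ α β x₀ = ⊤
  · rw [hT, EReal.top_add_coe]
    exact le_top
  · have hsf : sInf (egpSet x₀ α β x₀) < egp x₀ α β x₀ + ((δ/2 : ℝ) : EReal) := by
      rw [← egp_eq]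
      lift egp x₀ α β x₀ to ℝ using ⟨hT, egp_ne_bot x₀ α β x₀⟩ with E hE
      norm_cast
      linarith
    obtain ⟨t, htmem, htlt⟩ := sInf_lt_iff.1 hsf
    obtain ⟨u, hu, v, hv, rfl⟩ := htmem
    set ε₀ := min (δ/4) 1 with hε₀def
    have hε₀pos : 0 < ε₀ := lt_min (by linarith) one_pos
    have hε₀1 : ε₀ ≤ 1 := min_le_right _ _
    have hε₀le : ε₀ ≤ δ/4 := min_le_left _ _
    have hcu := hcomp hδ hhyp hgeo lm hinv hBA α hu y hε₀pos hε₀1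
    have hcv := hcomp hδ hhyp hgeo lm hinv hBA β hv y hε₀pos hε₀1
    set c₁ : ℝ := C0 + (4*δ + 2*ε₀) with hc₁
    have hev : ∀ᶠ p : ℕ × ℕ in atTop,
        gp (u p.1) (v p.2) y ≤ gp (u p.1) (v p.2) x₀ + c₁ := by
      filter_upwards [ev_prod_fst hcu, ev_prod_snd hcv] with p h1 h2
      have hid := hfun_base x₀ (u p.1) (v p.2) y
      rw [abs_le] at h1 h2
      rw [hc₁, hC0]
      linarith [h1.2, h2.2]
    have hstep1 : egp x₀ (bordMap x₀ g α) (bordMap x₀ g β) x₀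
        ≤ liminf (fun p : ℕ × ℕ => ((gp (u p.1) (v p.2) y : ℝ) : EReal)) atTop := by
      rw [egp_conj hhyp g α β]
      exact sInf_le ⟨u, hu, v, hv, rfl⟩
    have hstep2 : liminf (fun p : ℕ × ℕ => ((gp (u p.1) (v p.2) y : ℝ) : EReal)) atTop
        ≤ liminf (fun p : ℕ × ℕ => ((gp (u p.1) (v p.2) x₀ : ℝ) : EReal) + ((c₁ : ℝ) : EReal))
            atTop := by
      apply liminf_mono'
      filter_upwards [hev] with p hp
      rw [← EReal.coe_add]
      exact EReal.coe_le_coe_iff.2 hp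
    have hstep3 : liminf (fun p : ℕ × ℕ => ((gp (u p.1) (v p.2) x₀ : ℝ) : EReal) + ((c₁ : ℝ) : EReal)) atTop
        = liminf (fun p : ℕ × ℕ => ((gp (u p.1) (v p.2) x₀ : ℝ) : EReal)) atTop + ((c₁ : ℝ) : EReal) :=
      liminf_add_coe _ _
    have hstep4 : liminf (fun p : ℕ × ℕ => ((gp (u p.1) (v p.2) x₀ : ℝ) : EReal)) atTop + ((c₁ : ℝ) : EReal)
        ≤ (egp x₀ α β x₀ + ((δ/2 : ℝ) : EReal)) + ((c₁ : ℝ) : EReal) :=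
      add_le_add_left htlt.le _
    have hstep5 : (egp x₀ α β x₀ + ((δ/2 : ℝ) : EReal)) + ((c₁ : ℝ) : EReal)
        = egp x₀ α β x₀ + ((δ/2 + c₁ : ℝ) : EReal) := by
      rw [add_assoc, ← EReal.coe_add]
    have hstep6 : egp x₀ α β x₀ + ((δ/2 + c₁ : ℝ) : EReal)
        ≤ egp x₀ α β x₀ + ((C0 + 5*δ : ℝ) : EReal) := by
      apply add_le_add_right
      apply EReal.coe_le_coe_iff.2
      rw [hc₁]
      linarith
    calc egp x₀ (bordMap x₀ g α) (bordMap x₀ g β) x₀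
        ≤ _ := hstep1
      _ ≤ _ := hstep2
      _ = _ := hstep3
      _ ≤ _ := hstep4
      _ = _ := hstep5
      _ ≤ _ := hstep6

lemma egp_conj_ge (hδ : 0 < δ) (hhyp : IsHyperbolic X δ) (hgeo : IsGeodesic X)
    (lm : (X → ℝ) → Bdry x₀ b) (hinv : Bdry x₀ b → (X → ℝ))
    (hBA : BasicAssumption x₀ b lm hinv) (g : X ≃ᵢ X) (α β : Bord x₀) :
    egp x₀ α β x₀ +
        (((hB x₀ b hinv α (g.symm x₀) + hB x₀ b hinv β (g.symm x₀))/2 - 5*δ : ℝ) : EReal)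
      ≤ egp x₀ (bordMap x₀ g α) (bordMap x₀ g β) x₀ := by
  set y := g.symm x₀ with hy
  set C0 : ℝ := (hB x₀ b hinv α y + hB x₀ b hinv β y)/2 with hC0
  rw [egp_conj hhyp g α β]
  refine le_sInf ?_
  rintro t ⟨u, hu, v, hv, rfl⟩
  set ε₀ := min (δ/4) 1 with hε₀def
  have hε₀pos : 0 < ε₀ := lt_min (by linarith) one_pos
  have hε₀1 : ε₀ ≤ 1 := min_le_right _ _
  have hε₀le : ε₀ ≤ δ/4 := min_le_left _ _
  have hcu := hcomp hδ hhyp hgeo lm hinv hBA α hu y hε₀pos hε₀1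
  have hcv := hcomp hδ hhyp hgeo lm hinv hBA β hv y hε₀pos hε₀1
  have hev : ∀ᶠ p : ℕ × ℕ in atTop,
      gp (u p.1) (v p.2) x₀ + (C0 - 5*δ) ≤ gp (u p.1) (v p.2) y := by
    filter_upwards [ev_prod_fst hcu, ev_prod_snd hcv] with p h1 h2
    have hid := hfun_base x₀ (u p.1) (v p.2) y
    rw [abs_le] at h1 h2
    rw [hC0]
    linarith [h1.1, h2.1]
  have hstep1 : egp x₀ α β x₀ + ((C0 - 5*δ : ℝ) : EReal)
      ≤ liminf (fun p : ℕ × ℕ => ((gp (u p.1) (v p.2) x₀ : ℝ) : EReal)) atTop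
          + ((C0 - 5*δ : ℝ) : EReal) :=
    add_le_add_left (egp_le_mem hu hv) _
  have hstep2 : liminf (fun p : ℕ × ℕ => ((gp (u p.1) (v p.2) x₀ : ℝ) : EReal)) atTop
          + ((C0 - 5*δ : ℝ) : EReal)
      = liminf (fun p : ℕ × ℕ => ((gp (u p.1) (v p.2) x₀ : ℝ) : EReal) + ((C0 - 5*δ : ℝ) : EReal))
          atTop := (liminf_add_coe _ _).symm
  have hstep3 : liminf (fun p : ℕ × ℕ => ((gp (u p.1) (v p.2) x₀ : ℝ) : EReal) + ((C0 - 5*δ : ℝ) : EReal)) atTop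
      ≤ liminf (fun p : ℕ × ℕ => ((gp (u p.1) (v p.2) y : ℝ) : EReal)) atTop := by
    apply liminf_mono'
    filter_upwards [hev] with p hp
    rw [← EReal.coe_add]
    exact EReal.coe_le_coe_iff.2 hp
  calc egp x₀ α β x₀ + ((C0 - 5*δ : ℝ) : EReal)
      ≤ _ := hstep1
    _ = _ := hstep2
    _ ≤ _ := hstep3

lemma rhoVal_coe (b r : ℝ) : rhoVal b ((r : ℝ) : EReal) = b ^ (-r) := by
  simp [rhoVal]

/-- Distortion of `ρ_b` under an isometry. -/
lemma rho_conj (hδ : 0 < δ) (hb : 1 < b) (hhyp : IsHyperbolic X δ) (hgeo : IsGeodesic X)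
    (lm : (X → ℝ) → Bdry x₀ b) (hinv : Bdry x₀ b → (X → ℝ))
    (hBA : BasicAssumption x₀ b lm hinv) (g : X ≃ᵢ X) (α β : Bord x₀) :
    rho x₀ b (bordMap x₀ g α) (bordMap x₀ g β)
        ≤ b ^ (5*δ) * (b ^ (-((hB x₀ b hinv α (g.symm x₀) + hB x₀ b hinv β (g.symm x₀)) / 2))
            * rho x₀ b α β)
      ∧ b ^ (-(5*δ)) * (b ^ (-((hB x₀ b hinv α (g.symm x₀) + hB x₀ b hinv β (g.symm x₀)) / 2))
            * rho x₀ b α β)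
        ≤ rho x₀ b (bordMap x₀ g α) (bordMap x₀ g β) := by
  have hb0 : (0:ℝ) < b := lt_trans one_pos hb
  set y := g.symm x₀ with hy
  set S : ℝ := hB x₀ b hinv α y + hB x₀ b hinv β y with hS
  have hU := egp_conj_le hδ hhyp hgeo lm hinv hBA g α β
  have hD := egp_conj_ge hδ hhyp hgeo lm hinv hBA g α β
  by_cases hT : egp x₀ α β x₀ = ⊤
  · have hE' : egp x₀ (bordMap x₀ g α) (bordMap x₀ g β) x₀ = ⊤ := by
      rw [hT, EReal.top_add_coe] at hD
      exact top_le_iff.1 hD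
    rw [rho_eq_rhoVal, rho_eq_rhoVal, hT, hE', rhoVal_top]
    constructor <;> simp
  · obtain ⟨a, ha⟩ : ∃ a : ℝ, egp x₀ α β x₀ = ((a : ℝ) : EReal) := by
      lift egp x₀ α β x₀ to ℝ using ⟨hT, egp_ne_bot x₀ α β x₀⟩ with E hE
      exact ⟨E, rfl⟩
    rw [ha] at hU hD
    rw [← EReal.coe_add] at hU hD
    have hE'top : egp x₀ (bordMap x₀ g α) (bordMap x₀ g β) x₀ ≠ ⊤ := by
      intro hcon
      rw [hcon] at hU
      exact EReal.coe_ne_top _ (top_le_iff.1 hU)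
    obtain ⟨a', ha'⟩ : ∃ a' : ℝ, egp x₀ (bordMap x₀ g α) (bordMap x₀ g β) x₀ = ((a' : ℝ) : EReal) := by
      lift egp x₀ (bordMap x₀ g α) (bordMap x₀ g β) x₀ to ℝ using
        ⟨hE'top, egp_ne_bot x₀ _ _ x₀⟩ with E hE
      exact ⟨E, rfl⟩
    rw [ha'] at hU hD
    rw [EReal.coe_le_coe_iff] at hU hD
    rw [rho_eq_rhoVal, rho_eq_rhoVal, ha, ha', rhoVal_coe, rhoVal_coe]
    constructor
    · rw [← Real.rpow_add hb0, ← Real.rpow_add hb0]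
      rw [Real.rpow_le_rpow_left_iff hb]
      have : S / 2 = (hB x₀ b hinv α y + hB x₀ b hinv β y)/2 := by rw [hS]
      linarith [hD]
    · rw [← Real.rpow_add hb0, ← Real.rpow_add hb0]
      rw [Real.rpow_le_rpow_left_iff hb]
      linarith [hU]

end AuxConj

/-- **Distortion of the visual quasi-metric under isometries.** -/
theorem visual_quasi_metric_distortion
    {X : Type*} [MetricSpace X] [TopologicalSpace.SeparableSpace X]
    (x₀ : X) (δ b : ℝ) (hδ : 0 < δ) (hb : 1 < b) (hb2 : b ≤ (2:ℝ) ^ (1/δ))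
    (hgeo : IsGeodesic X) (hhyp : IsHyperbolic X δ)
    (lm : (X → ℝ) → Bdry x₀ b) (hinv : Bdry x₀ b → (X → ℝ))
    (hBA : BasicAssumption x₀ b lm hinv) :
    ∀ (g : X ≃ᵢ X) (ξ η : Bord x₀),
      1 / (4 * b ^ (6 * δ)) *
          b ^ (-((hB x₀ b hinv ξ (g.symm x₀) + hB x₀ b hinv η (g.symm x₀)) / 2)) *
          Dbar x₀ b ξ η ≤
        Dbar x₀ b (bordMap x₀ g ξ) (bordMap x₀ g η) ∧
      Dbar x₀ b (bordMap x₀ g ξ) (bordMap x₀ g η) ≤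
        4 * b ^ (6 * δ) *
          b ^ (-((hB x₀ b hinv ξ (g.symm x₀) + hB x₀ b hinv η (g.symm x₀)) / 2)) *
          Dbar x₀ b ξ η := by
  intro g ξ η
  have hb0 : (0:ℝ) < b := lt_trans one_pos hb
  by_cases hξη : ξ = η
  · subst hξη
    rw [dbar_self x₀ hb ξ, dbar_self x₀ hb (bordMap x₀ g ξ)]
    constructor <;> simp
  · have hne' : bordMap x₀ g ξ ≠ bordMap x₀ g η := fun hcon => hξη (bordMap_inj g hcon)
    set K := b ^ (-((hB x₀ b hinv ξ (g.symm x₀) + hB x₀ b hinv η (g.symm x₀)) / 2)) with hK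
    have hKpos : 0 < K := Real.rpow_pos_of_pos hb0 _
    set D := Dbar x₀ b ξ η with hD
    set D' := Dbar x₀ b (bordMap x₀ g ξ) (bordMap x₀ g η) with hD'
    set R := rho x₀ b ξ η with hR
    set R' := rho x₀ b (bordMap x₀ g ξ) (bordMap x₀ g η) with hR'
    have hDnn : 0 ≤ D := dbar_nonneg hb x₀ ξ η
    have hRnn : 0 ≤ R := rho_nonneg hb x₀ ξ η
    have hDR : D ≤ R := dbar_le_rho hb x₀ ξ η
    have hDR' : D' ≤ R' := dbar_le_rho hb x₀ _ _
    have hF : R ≤ 4 * D := rho_le_four_dbar hδ hb hb2 hhyp x₀ hξη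
    have hF' : R' ≤ 4 * D' := rho_le_four_dbar hδ hb hb2 hhyp x₀ hne'
    obtain ⟨hCu, hCl⟩ := rho_conj hδ hb hhyp hgeo lm hinv hBA g ξ η
    rw [← hK, ← hR, ← hR'] at hCu hCl
    have hb5 : (0:ℝ) < b ^ (5*δ) := Real.rpow_pos_of_pos hb0 _
    have hb6 : (0:ℝ) < b ^ (6*δ) := Real.rpow_pos_of_pos hb0 _
    have hb56 : b ^ (5*δ) ≤ b ^ (6*δ) := by
      rw [Real.rpow_le_rpow_left_iff hb]
      linarith
    have hb65 : b ^ (-(6*δ)) ≤ b ^ (-(5*δ)) := by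
      rw [Real.rpow_le_rpow_left_iff hb]
      linarith
    have hKD : 0 ≤ K * D := mul_nonneg hKpos.le hDnn
    constructor
    · -- lower bound
      have c1 : b ^ (-(5*δ)) * (K * D) ≤ b ^ (-(5*δ)) * (K * R) := by
        apply mul_le_mul_of_nonneg_left _ (Real.rpow_pos_of_pos hb0 _).le
        exact mul_le_mul_of_nonneg_left hDR hKpos.le
      have c2 : b ^ (-(5*δ)) * (K * D) ≤ 4 * D' := le_trans c1 (le_trans hCl hF')
      have c5 : b ^ (-(6*δ)) * (K * D) ≤ b ^ (-(5*δ)) * (K * D) :=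
        mul_le_mul_of_nonneg_right hb65 hKD
      have c4 : b ^ (-(6*δ)) = 1 / (b ^ (6*δ)) := by
        rw [Real.rpow_neg hb0.le, one_div]
      have c6 : 1/(4 * b ^ (6*δ)) * K * D = (b ^ (-(6*δ)) * (K * D))/4 := by
        rw [c4]
        field_simp
      rw [show (6:ℝ) * δ = 6*δ from rfl]
      calc 1 / (4 * b ^ (6 * δ)) * K * D = (b ^ (-(6*δ)) * (K * D))/4 := c6
        _ ≤ (b ^ (-(5*δ)) * (K * D))/4 := by linarith
        _ ≤ D' := by linarith
    · -- upper bound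
      calc D' ≤ R' := hDR'
        _ ≤ b ^ (5*δ) * (K * R) := hCu
        _ ≤ b ^ (5*δ) * (K * (4 * D)) := by
            apply mul_le_mul_of_nonneg_left _ hb5.le
            exact mul_le_mul_of_nonneg_left hF hKpos.le
        _ ≤ b ^ (6*δ) * (K * (4 * D)) := by
            apply mul_le_mul_of_nonneg_right hb56
            positivity
        _ = 4 * b ^ (6 * δ) * K * D := by ring
end Paper
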